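/- arXiv:2204.00394 — 3 statements merged into one kernel-verified Lean document; each statement's English description precedes it below -/
import Mathlib

section
/- Let F ⊆ A^+_ℤ be a set of connected patterns (words) over a finite alphabet A and β > 0 with |A| − Σ_{f∈F} β^{1−|f|} ≥ β. Then for every n ≥ 0, the number of words of length n over A avoiding all factors in F is at least β^n; in particular h(X_F) ≥ log β. -/
/-- A finite word `w` occurs in a bi-infinite configuration `x : ℤ → A` if some translate
of `w` matches `x`. -/
def occursIn {A : Type*} (w : List A) (x : ℤ → A) : Prop :=
  ∃ g : ℤ, ∀ i : ℕ, ∀ hi : i < w.length, x (g + i) = w.get ⟨i, hi⟩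

/-- The subshift over `ℤ` defined by the set of forbidden words `F`. -/
def zShift {A : Type*} (F : Set (List A)) : Set (ℤ → A) :=
  {x | ∀ w ∈ F, ¬ occursIn w x}

/-- The language of length-`n` words appearing in some configuration of `X`. -/
def lang {A : Type*} (X : Set (ℤ → A)) (n : ℕ) : Set (List A) :=
  {w | w.length = n ∧ ∃ x ∈ X, occursIn w x}

set_option linter.unusedSectionVars false
section Aux
variable {A : Type*} [Fintype A]

def WAvoids (F : Set (List A)) (w : List A) : Prop := ∀ u ∈ F, ¬ u <:+: w

lemma WAvoids.of_infix {F : Set (List A)} {w v : List A} (h : WAvoids F w) (hv : v <:+: w) :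
    WAvoids F v := fun u hu hi => h u hu (hi.trans hv)

open Classical in
noncomputable def allW (A : Type*) [Fintype A] (n : ℕ) : Finset (List A) :=
  (Finset.univ : Finset (Fin n → A)).image List.ofFn

lemma mem_allW {n : ℕ} {w : List A} : w ∈ allW A n ↔ w.length = n := by
  classical
  constructor
  · rintro hw
    simp only [allW, Finset.mem_image] at hw
    obtain ⟨f, -, rfl⟩ := hw
    simp
  · rintro rfl
    simp only [allW, Finset.mem_image]
    exact ⟨w.get, by simp, List.ofFn_get w⟩

open Classical in
noncomputable def Gs (F : Set (List A)) (n : ℕ) : Finset (List A) :=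
  (allW A n).filter (WAvoids F)

lemma mem_Gs {F : Set (List A)} {n : ℕ} {w : List A} :
    w ∈ Gs F n ↔ w.length = n ∧ WAvoids F w := by
  classical
  simp [Gs, mem_allW, Finset.mem_filter]

lemma Gs_zero {F : Set (List A)} (hne : ∀ f ∈ F, f ≠ []) : Gs F 0 = {([] : List A)} := by
  ext w
  simp only [mem_Gs, List.length_eq_zero_iff, Finset.mem_singleton]
  constructor
  · rintro ⟨rfl, -⟩; rfl
  · rintro rfl
    refine ⟨rfl, fun u hu hi => hne u hu ?_⟩
    simpa using List.eq_nil_of_infix_nil hi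

lemma infix_concat {u w : List A} {a : A} (h : u <:+: w ++ [a]) : u <:+: w ∨ u <:+ w ++ [a] := by
  obtain ⟨s, t, hst⟩ := h
  rcases List.eq_nil_or_concat t with rfl | ⟨t', b, rfl⟩
  · right; exact ⟨s, by simpa using hst⟩
  · left
    have h2 : (s ++ u ++ t') ++ [b] = w ++ [a] := by
      rw [← hst, List.concat_eq_append]
      simp [List.append_assoc]
    exact ⟨s, t', (List.append_inj' h2 (by simp)).1⟩

variable {F : Set (List A)} {β : ℝ}

lemma Gs_step (hne : ∀ f ∈ F, f ≠ []) (hβ : 0 < β)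
    (hsum : Summable fun f : F => β ^ (1 - (f.1.length : ℤ)))
    (hcond : (Fintype.card A : ℝ) - ∑' f : F, β ^ (1 - (f.1.length : ℤ)) ≥ β)
    (n : ℕ)
    (chain : ∀ j, j ≤ n → β ^ (n - j) * ((Gs F j).card : ℝ) ≤ ((Gs F n).card : ℝ)) :
    β * ((Gs F n).card : ℝ) ≤ ((Gs F (n + 1)).card : ℝ) := by
  classical
  set pairs : Finset (List A × A) := (Gs F n) ×ˢ Finset.univ with hpairsdef
  set good := pairs.filter (fun p => WAvoids F (p.1 ++ [p.2])) with hgooddef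
  set bad := pairs.filter (fun p => ¬ WAvoids F (p.1 ++ [p.2])) with hbaddef
  have hsplit : good.card + bad.card = pairs.card :=
    Finset.card_filter_add_card_filter_not _
  have hpairscard : pairs.card = (Gs F n).card * Fintype.card A := by
    simp [hpairsdef]
  -- facts about membership
  have hmem_pairs : ∀ p : List A × A, p ∈ pairs ↔ p.1 ∈ Gs F n := by
    intro p; simp [hpairsdef]
  -- good bound
  have hgoodcard : good.card ≤ (Gs F (n + 1)).card := by
    apply Finset.card_le_card_of_injOn (fun p => p.1 ++ [p.2])
    · intro p hp
      simp only [Finset.mem_coe, hgooddef, Finset.mem_filter, hmem_pairs] at hp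
      rw [Finset.mem_coe, mem_Gs]
      exact ⟨by simp [(mem_Gs.1 hp.1).1], hp.2⟩
    · intro p hp q hq heq
      rw [Finset.mem_coe, hgooddef, Finset.mem_filter, hmem_pairs, mem_Gs] at hp hq
      have hl : p.1.length = q.1.length := by rw [hp.1.1, hq.1.1]
      obtain ⟨h1, h2⟩ := List.append_inj heq hl
      exact Prod.ext h1 (by simpa using h2)
  -- bad analysis
  set pick : List A × A → List A := fun p =>
    if h : ∃ u, u ∈ F ∧ u <:+ (p.1 ++ [p.2]) then h.choose else [] with hpickdef
  have hpick : ∀ p ∈ bad, pick p ∈ F ∧ pick p <:+ (p.1 ++ [p.2]) := by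
    intro p hp
    rw [hbaddef, Finset.mem_filter, hmem_pairs] at hp
    have havoid : WAvoids F p.1 := (mem_Gs.1 hp.1).2
    have hex : ∃ u, u ∈ F ∧ u <:+ (p.1 ++ [p.2]) := by
      have := hp.2
      simp only [WAvoids, not_forall] at this
      obtain ⟨u, hu, hinf⟩ := this
      have hinf' : u <:+: p.1 ++ [p.2] := not_not.1 hinf
      rcases infix_concat hinf' with h | h
      · exact absurd h (havoid u hu)
      · exact ⟨u, hu, h⟩
    rw [hpickdef]
    simp only [hex, dif_pos]
    exact hex.choose_spec
  set badU := bad.image pick with hbadUdef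
  have hfib : bad.card = ∑ u ∈ badU, (bad.filter (fun p => pick p = u)).card :=
    Finset.card_eq_sum_card_fiberwise (fun p hp => Finset.mem_image_of_mem _ hp)
  -- per-fiber bound
  have hfiber : ∀ u ∈ badU,
      ((bad.filter (fun p => pick p = u)).card : ℝ) ≤ β ^ ((1 : ℤ) - u.length) * (Gs F n).card := by
    intro u hu
    obtain ⟨p₀, hp₀, hpick₀⟩ := Finset.mem_image.1 hu
    have huF : u ∈ F := hpick₀ ▸ (hpick p₀ hp₀).1
    have hune : u ≠ [] := hne u huF
    have hulen1 : 1 ≤ u.length := List.length_pos_iff.2 hune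
    have hulen2 : u.length ≤ n + 1 := by
      have := (hpick p₀ hp₀).2.length_le
      have hp₀len : p₀.1.length = n := (mem_Gs.1 ((hmem_pairs p₀).1 (Finset.mem_of_mem_filter _ hp₀))).1
      rw [hpick₀] at this
      simpa [hp₀len] using this
    -- canonical decomposition of fiber elements
    have hdecomp : ∀ p ∈ bad.filter (fun p => pick p = u),
        p.1 ++ [p.2] = p.1.take (n + 1 - u.length) ++ u ∧ p.1 ∈ Gs F n := by
      intro p hp
      rw [Finset.mem_filter] at hp
      have hpmem : p.1 ∈ Gs F n := (hmem_pairs p).1 (Finset.mem_of_mem_filter _ hp.1)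
      have hplen : p.1.length = n := (mem_Gs.1 hpmem).1
      have hsuf : u <:+ p.1 ++ [p.2] := hp.2 ▸ (hpick p hp.1).2
      obtain ⟨s, hs⟩ := hsuf
      have hslen : s.length = n + 1 - u.length := by
        have := congrArg List.length hs
        simp [hplen] at this
        omega
      have hstake : s = (p.1 ++ [p.2]).take (n + 1 - u.length) := by
        rw [← hs, ← hslen, List.take_left]
      have htake : (p.1 ++ [p.2]).take (n + 1 - u.length) = p.1.take (n + 1 - u.length) :=
        List.take_append_of_le_length (by omega)
      refine ⟨?_, hpmem⟩
      rw [← hs, hstake, htake]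
    have hcard1 : (bad.filter (fun p => pick p = u)).card ≤ (Gs F (n + 1 - u.length)).card := by
      apply Finset.card_le_card_of_injOn (fun p => p.1.take (n + 1 - u.length))
      · intro p hp
        obtain ⟨-, hpmem⟩ := hdecomp p hp
        have hplen : p.1.length = n := (mem_Gs.1 hpmem).1
        rw [Finset.mem_coe, mem_Gs]
        constructor
        · rw [List.length_take, hplen]; omega
        · exact (mem_Gs.1 hpmem).2.of_infix (List.take_prefix _ _).isInfix
      · intro p hp q hq heq
        simp only [Finset.mem_coe] at hp hq
        dsimp only at heq
        have h1 := (hdecomp p hp).1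
        have h2 := (hdecomp q hq).1
        have : p.1 ++ [p.2] = q.1 ++ [q.2] := by rw [h1, h2, heq]
        have hl : p.1.length = q.1.length := by
          rw [(mem_Gs.1 (hdecomp p hp).2).1, (mem_Gs.1 (hdecomp q hq).2).1]
        obtain ⟨e1, e2⟩ := List.append_inj this hl
        exact Prod.ext e1 (by simpa using e2)
    -- chain bound
    have hchain := chain (n + 1 - u.length) (by omega)
    have hexp : n - (n + 1 - u.length) = u.length - 1 := by omega
    rw [hexp] at hchain
    have hzpow : β ^ ((1 : ℤ) - u.length) = (β ^ (u.length - 1))⁻¹ := by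
      rw [show (1 : ℤ) - u.length = -((u.length - 1 : ℕ) : ℤ) by push_cast; omega, zpow_neg,
        zpow_natCast]
    rw [hzpow]
    calc ((bad.filter (fun p => pick p = u)).card : ℝ) ≤ (Gs F (n + 1 - u.length)).card := by
          exact_mod_cast hcard1
      _ ≤ (β ^ (u.length - 1))⁻¹ * (Gs F n).card := by
          rw [← div_eq_inv_mul, le_div_iff₀ (by positivity), mul_comm]
          exact hchain
  -- sum over fibers, compare with tsum
  have hsubF : ∀ u ∈ badU, u ∈ F := by
    intro u hu
    obtain ⟨p₀, hp₀, hpick₀⟩ := Finset.mem_image.1 hu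
    exact hpick₀ ▸ (hpick p₀ hp₀).1
  have hsumU : ∑ u ∈ badU, β ^ ((1 : ℤ) - u.length) ≤ ∑' f : F, β ^ (1 - (f.1.length : ℤ)) := by
    have hinj : Function.Injective
        (fun x : {x // x ∈ badU} => (⟨x.1, hsubF x.1 x.2⟩ : F)) := by
      intro x y hxy
      exact Subtype.ext (congrArg Subtype.val hxy :)
    have h1 : ∑ u ∈ badU, β ^ ((1 : ℤ) - u.length)
        = ∑ y ∈ badU.attach.image (fun x => (⟨x.1, hsubF x.1 x.2⟩ : F)),
            β ^ (1 - ((y : List A).length : ℤ)) := by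
      rw [Finset.sum_image (fun x _ y _ h => hinj h)]
      rw [← Finset.sum_attach badU (fun u => β ^ ((1:ℤ) - u.length))]
    rw [h1]
    exact Summable.sum_le_tsum _ (fun i _ => (zpow_pos hβ _).le) hsum
  -- put it together
  have hbadcard : (bad.card : ℝ) ≤ (∑' f : F, β ^ (1 - (f.1.length : ℤ))) * (Gs F n).card := by
    calc (bad.card : ℝ) = ∑ u ∈ badU, ((bad.filter (fun p => pick p = u)).card : ℝ) := by
          rw [hfib]; push_cast; ring
      _ ≤ ∑ u ∈ badU, β ^ ((1 : ℤ) - u.length) * (Gs F n).card :=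
          Finset.sum_le_sum hfiber
      _ = (∑ u ∈ badU, β ^ ((1 : ℤ) - u.length)) * (Gs F n).card := by
          rw [Finset.sum_mul]
      _ ≤ _ := by
          apply mul_le_mul_of_nonneg_right hsumU (by positivity)
  have hgoodR : (good.card : ℝ) ≤ ((Gs F (n+1)).card : ℝ) := by exact_mod_cast hgoodcard
  have hsplitR : (good.card : ℝ) + bad.card = (Gs F n).card * Fintype.card A := by
    have := hsplit
    rw [hpairscard] at this
    exact_mod_cast congrArg (Nat.cast : ℕ → ℝ) this
  set T := ∑' f : F, β ^ (1 - (f.1.length : ℤ)) with hT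
  have hc0 : (0:ℝ) ≤ (Gs F n).card := by positivity
  nlinarith [hbadcard, hgoodR, hsplitR, hcond, hc0]

lemma Gs_chain (hne : ∀ f ∈ F, f ≠ []) (hβ : 0 < β)
    (hsum : Summable fun f : F => β ^ (1 - (f.1.length : ℤ)))
    (hcond : (Fintype.card A : ℝ) - ∑' f : F, β ^ (1 - (f.1.length : ℤ)) ≥ β) :
    ∀ n j, j ≤ n → β ^ (n - j) * ((Gs F j).card : ℝ) ≤ ((Gs F n).card : ℝ) := by
  intro n
  induction n with
  | zero => intro j hj; interval_cases j; simp
  | succ n ih =>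
    intro j hj
    rcases Nat.eq_or_lt_of_le hj with rfl | hlt
    · simp
    · have hj' : j ≤ n := by omega
      have h1 := ih j hj'
      have h2 := Gs_step hne hβ hsum hcond n ih
      have hexp : n + 1 - j = (n - j) + 1 := by omega
      rw [hexp, pow_succ]
      nlinarith [pow_nonneg hβ.le (n - j), (by positivity : (0:ℝ) ≤ ((Gs F j).card : ℝ))]

lemma pow_le_Gs_card (hne : ∀ f ∈ F, f ≠ []) (hβ : 0 < β)
    (hsum : Summable fun f : F => β ^ (1 - (f.1.length : ℤ)))
    (hcond : (Fintype.card A : ℝ) - ∑' f : F, β ^ (1 - (f.1.length : ℤ)) ≥ β) (n : ℕ) :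
    β ^ n ≤ ((Gs F n).card : ℝ) := by
  have h := Gs_chain hne hβ hsum hcond n 0 (Nat.zero_le n)
  simpa [Gs_zero hne] using h

lemma Gs_nonempty (hne : ∀ f ∈ F, f ≠ []) (hβ : 0 < β)
    (hsum : Summable fun f : F => β ^ (1 - (f.1.length : ℤ)))
    (hcond : (Fintype.card A : ℝ) - ∑' f : F, β ^ (1 - (f.1.length : ℤ)) ≥ β) (n : ℕ) :
    ∃ w, w ∈ Gs F n := by
  have h := pow_le_Gs_card hne hβ hsum hcond n
  have : 0 < (Gs F n).card := by
    rcases Nat.eq_zero_or_pos (Gs F n).card with h0 | hp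
    · rw [h0] at h
      norm_num at h
      nlinarith [pow_pos hβ n]
    · exact hp
  exact (Finset.card_pos.1 this).exists_mem


/-- `w` extends to an avoiding word with margins of length `k` on both sides. -/
def Wit (F : Set (List A)) (k : ℕ) (w : List A) : Prop :=
  ∃ u v : List A, u.length = k ∧ v.length = k ∧ WAvoids F (u ++ w ++ v)

/-- `w` is bi-extendable. -/
def BiExt (F : Set (List A)) (w : List A) : Prop := ∀ k, Wit F k w

lemma Wit.shrink {k : ℕ} {w : List A} (h : Wit F (k + 1) w) : Wit F k w := by
  obtain ⟨u, v, hu, hv, hav⟩ := h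
  have hvne : v ≠ [] := by intro h; rw [h] at hv; simp at hv
  refine ⟨u.drop 1, v.dropLast, by simp [hu], by simp [hv], ?_⟩
  apply hav.of_infix
  refine ⟨u.take 1, [v.getLast hvne], ?_⟩
  calc u.take 1 ++ (u.drop 1 ++ w ++ v.dropLast) ++ [v.getLast hvne]
      = (u.take 1 ++ u.drop 1) ++ w ++ (v.dropLast ++ [v.getLast hvne]) := by
        simp [List.append_assoc]
    _ = u ++ w ++ v := by rw [List.take_append_drop, List.dropLast_append_getLast]

lemma Wit.anti {k k' : ℕ} {w : List A} (hkk : k ≤ k') (h : Wit F k' w) : Wit F k w := by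
  induction k' with
  | zero => exact (Nat.le_zero.1 hkk) ▸ h
  | succ n ih =>
    rcases Nat.eq_or_lt_of_le hkk with rfl | hlt
    · exact h
    · exact ih (by omega) h.shrink

lemma Wit.avoids {k : ℕ} {w : List A} (h : Wit F k w) : WAvoids F w := by
  obtain ⟨u, v, hu, hv, hav⟩ := h.anti (Nat.zero_le k)
  rw [List.length_eq_zero_iff] at hu hv
  simpa [hu, hv] using hav

open Classical in
noncomputable def Ss (F : Set (List A)) (k m : ℕ) : Finset (List A) :=
  (allW A m).filter (Wit F k)

lemma mem_Ss {k m : ℕ} {w : List A} : w ∈ Ss F k m ↔ w.length = m ∧ Wit F k w := by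
  classical
  simp [Ss, mem_allW, Finset.mem_filter]

lemma Ss_anti {k k' m : ℕ} (hkk : k ≤ k') : Ss F k' m ⊆ Ss F k m := by
  intro w hw
  rw [mem_Ss] at hw ⊢
  exact ⟨hw.1, hw.2.anti hkk⟩

lemma take_drop_split (w : List A) (a b c : ℕ) :
    (w.drop a).take (b + c) = (w.drop a).take b ++ (w.drop (a + b)).take c := by
  rw [List.take_add, List.drop_drop]

lemma join_blocks (w : List A) (m : ℕ) :
    ∀ (q a : ℕ), (List.ofFn fun i : Fin q => (w.drop (a + i * m)).take m).flatten
      = (w.drop a).take (q * m) := by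
  intro q
  induction q with
  | zero => intro a; simp
  | succ q ih =>
    intro a
    rw [List.ofFn_succ]
    simp only [List.flatten_cons, Fin.val_succ, Fin.val_zero]
    have h1 : (List.ofFn fun i : Fin q => (w.drop (a + ((i : ℕ) + 1) * m)).take m)
        = List.ofFn fun i : Fin q => (w.drop ((a + m) + (i : ℕ) * m)).take m := by
      congr 1
      funext i
      congr 2
      ring
    rw [h1, ih (a + m)]
    rw [show a + 0 * m = a by ring]
    rw [show (q + 1) * m = m + q * m by ring, take_drop_split]

lemma Gs_le_blocks (F : Set (List A)) (k m q : ℕ) :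
    (Gs F (2 * k + q * m)).card ≤ (Gs F k).card ^ 2 * (Ss F k m).card ^ q := by
  classical
  set N := 2 * k + q * m with hN
  set T := (Gs F k) ×ˢ ((Fintype.piFinset fun _ : Fin q => Ss F k m) ×ˢ (Gs F k)) with hT
  have hmain : (Gs F N).card ≤ T.card := by
    apply Finset.card_le_card_of_injOn
      (fun w => (w.take k, (fun i : Fin q => (w.drop (k + i * m)).take m, w.drop (k + q * m))))
    · intro w hw
      obtain ⟨hwlen, hwav⟩ := mem_Gs.1 hw
      rw [Finset.mem_coe, Finset.mem_product]
      refine ⟨?_, ?_⟩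
      · rw [mem_Gs]
        exact ⟨by rw [List.length_take, hwlen]; omega,
          hwav.of_infix (List.take_prefix _ _).isInfix⟩
      rw [Finset.mem_product]
      constructor
      · rw [Fintype.mem_piFinset]
        intro i
        have hi : (i : ℕ) < q := i.2
        have him : (i : ℕ) * m + m ≤ q * m := by
          have h2 := Nat.mul_le_mul_right m (Nat.succ_le_of_lt hi)
          rw [Nat.succ_mul] at h2
          exact h2
        rw [mem_Ss]
        constructor
        · rw [List.length_take, List.length_drop, hwlen]; omega
        · refine ⟨(w.drop ((i : ℕ) * m)).take k, (w.drop ((i : ℕ) * m + k + m)).take k,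
            ?_, ?_, ?_⟩
          · rw [List.length_take, List.length_drop, hwlen]; omega
          · rw [List.length_take, List.length_drop, hwlen]; omega
          · have heq : (w.drop ((i : ℕ) * m)).take k ++ (w.drop (k + (i : ℕ) * m)).take m
                ++ (w.drop ((i : ℕ) * m + k + m)).take k
                = (w.drop ((i : ℕ) * m)).take (k + (m + k)) := by
              rw [take_drop_split w ((i : ℕ) * m) k (m + k),
                take_drop_split w ((i : ℕ) * m + k) m k]
              rw [show (i : ℕ) * m + k = k + (i : ℕ) * m by ring,
                show k + (i : ℕ) * m + m = (i : ℕ) * m + k + m by ring]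
              simp [List.append_assoc]
            apply hwav.of_infix
            rw [heq]
            exact ((List.take_prefix _ _).isInfix).trans (List.drop_suffix _ _).isInfix
      · rw [mem_Gs]
        refine ⟨by rw [List.length_drop, hwlen]; omega,
          hwav.of_infix (List.drop_suffix _ _).isInfix⟩
    · intro w hw w' hw' heq
      simp only [Finset.mem_coe] at hw hw'
      simp only [Prod.mk.injEq] at heq
      obtain ⟨e1, e2, e3⟩ := heq
      have hrec : ∀ v : List A, v ∈ Gs F N →
          v = v.take k ++ ((List.ofFn fun i : Fin q => (v.drop (k + i * m)).take m).flatten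
            ++ v.drop (k + q * m)) := by
        intro v hv
        rw [join_blocks v m q k]
        rw [show v.drop (k + q * m) = (v.drop k).drop (q * m) by rw [List.drop_drop]]
        rw [List.take_append_drop, List.take_append_drop]
      rw [hrec w hw, hrec w' hw', e1, e3, e2]
  calc (Gs F N).card ≤ T.card := hmain
    _ = (Gs F k).card ^ 2 * (Ss F k m).card ^ q := by
        rw [hT, Finset.card_product, Finset.card_product, Fintype.card_piFinset]
        simp [Finset.prod_const, sq]
        ring


lemma pow_le_Ss_card (hne : ∀ f ∈ F, f ≠ []) (hβ : 0 < β)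
    (hsum : Summable fun f : F => β ^ (1 - (f.1.length : ℤ)))
    (hcond : (Fintype.card A : ℝ) - ∑' f : F, β ^ (1 - (f.1.length : ℤ)) ≥ β) (k m : ℕ) :
    β ^ m ≤ ((Ss F k m).card : ℝ) := by
  have key : ∀ q : ℕ, β ^ (2 * k) * (β ^ m) ^ q
      ≤ ((Gs F k).card : ℝ) ^ 2 * ((Ss F k m).card : ℝ) ^ q := by
    intro q
    have h1 : β ^ (2 * k + q * m) ≤ ((Gs F (2 * k + q * m)).card : ℝ) :=
      pow_le_Gs_card hne hβ hsum hcond _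
    have h2 : ((Gs F (2 * k + q * m)).card : ℝ)
        ≤ ((Gs F k).card : ℝ) ^ 2 * ((Ss F k m).card : ℝ) ^ q := by
      exact_mod_cast Gs_le_blocks F k m q
    calc β ^ (2 * k) * (β ^ m) ^ q = β ^ (2 * k + q * m) := by
          rw [pow_add, ← pow_mul, Nat.mul_comm m q]
      _ ≤ _ := le_trans h1 h2
  have hSpos : (0 : ℝ) < ((Ss F k m).card : ℝ) := by
    rcases Nat.eq_zero_or_pos (Ss F k m).card with h0 | hp
    · exfalso
      have := key 1
      rw [h0] at this
      norm_num at this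
      nlinarith [pow_pos hβ (2 * k), pow_pos hβ m]
    · exact_mod_cast hp
  by_contra hlt
  push_neg at hlt
  obtain ⟨q, hq⟩ := pow_unbounded_of_one_lt
    ((((Gs F k).card : ℝ)) ^ 2 / β ^ (2 * k))
    (show 1 < β ^ m / ((Ss F k m).card : ℝ) by rw [lt_div_iff₀ hSpos]; linarith)
  have h3 : (β ^ m / ((Ss F k m).card : ℝ)) ^ q
      ≤ ((Gs F k).card : ℝ) ^ 2 / β ^ (2 * k) := by
    rw [div_pow, div_le_div_iff₀ (pow_pos hSpos q) (pow_pos hβ (2 * k))]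
    nlinarith [key q]
  linarith

lemma exists_core (hne : ∀ f ∈ F, f ≠ []) (hβ : 0 < β)
    (hsum : Summable fun f : F => β ^ (1 - (f.1.length : ℤ)))
    (hcond : (Fintype.card A : ℝ) - ∑' f : F, β ^ (1 - (f.1.length : ℤ)) ≥ β) (m : ℕ) :
    ∃ k₀ : ℕ, β ^ m ≤ ((Ss F k₀ m).card : ℝ) ∧
      ∀ w ∈ Ss F k₀ m, w.length = m ∧ BiExt F w := by
  have hrange : (Set.range fun k => (Ss F k m).card).Nonempty := ⟨_, 0, rfl⟩
  obtain ⟨k₀, hk₀⟩ := Nat.sInf_mem hrange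
  dsimp only at hk₀
  refine ⟨k₀, pow_le_Ss_card hne hβ hsum hcond k₀ m, ?_⟩
  have hstable : ∀ k, k₀ ≤ k → Ss F k m = Ss F k₀ m := by
    intro k hk
    apply Finset.eq_of_subset_of_card_le (Ss_anti hk)
    rw [hk₀]
    exact Nat.sInf_le ⟨k, rfl⟩
  intro w hw
  refine ⟨(mem_Ss.1 hw).1, fun k => ?_⟩
  rcases le_total k k₀ with h | h
  · exact (mem_Ss.1 (Ss_anti h hw)).2
  · exact (mem_Ss.1 (by rw [hstable k h]; exact hw)).2


lemma BiExt.avoids {w : List A} (h : BiExt F w) : WAvoids F w := (h 0).avoids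

lemma biExt_cons_right {w : List A} (hbe : BiExt F w) : ∃ a, BiExt F (w ++ [a]) := by
  have hT : ∀ k, ∃ a, Wit F k (w ++ [a]) := by
    intro k
    obtain ⟨u, v, hu, hv, hav⟩ := hbe (k + 1)
    have hvne : v ≠ [] := by intro h; rw [h] at hv; simp at hv
    have hune : u ≠ [] := by intro h; rw [h] at hu; simp at hu
    obtain ⟨a, v', rfl⟩ := List.exists_cons_of_ne_nil hvne
    obtain ⟨b, u', rfl⟩ := List.exists_cons_of_ne_nil hune
    refine ⟨a, u', v', by simpa using hu, by simpa using hv, ?_⟩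
    apply hav.of_infix
    refine ⟨[b], [], ?_⟩
    simp [List.append_assoc]
  choose g hg using hT
  obtain ⟨a, ha⟩ := Finite.exists_infinite_fiber g
  have hinf : (g ⁻¹' {a} : Set ℕ).Infinite := Set.infinite_coe_iff.1 ha
  refine ⟨a, fun k => ?_⟩
  obtain ⟨k', hk', hkk'⟩ := hinf.exists_gt k
  have hk'a : g k' = a := hk'
  have := hg k'
  rw [hk'a] at this
  exact this.anti hkk'.le

lemma biExt_cons_left {w : List A} (hbe : BiExt F w) : ∃ a, BiExt F (a :: w) := by
  have hT : ∀ k, ∃ a, Wit F k (a :: w) := by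
    intro k
    obtain ⟨u, v, hu, hv, hav⟩ := hbe (k + 1)
    have hvne : v ≠ [] := by intro h; rw [h] at hv; simp at hv
    have hune : u ≠ [] := by intro h; rw [h] at hu; simp at hu
    obtain ⟨u₀, a, rfl⟩ := (List.eq_nil_or_concat u).resolve_left hune
    refine ⟨a, u₀, v.dropLast, ?_, by simp [hv], ?_⟩
    · have h5 : u₀.length + 1 = k + 1 := by simpa [List.concat_eq_append] using hu
      omega
    · apply hav.of_infix
      refine ⟨[], [v.getLast hvne], ?_⟩
      rw [List.concat_eq_append]
      calc [] ++ (u₀ ++ (a :: w) ++ v.dropLast) ++ [v.getLast hvne]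
          = (u₀ ++ [a]) ++ w ++ (v.dropLast ++ [v.getLast hvne]) := by
            simp [List.append_assoc]
        _ = (u₀ ++ [a]) ++ w ++ v := by rw [List.dropLast_append_getLast]
  choose g hg using hT
  obtain ⟨a, ha⟩ := Finite.exists_infinite_fiber g
  have hinf : (g ⁻¹' {a} : Set ℕ).Infinite := Set.infinite_coe_iff.1 ha
  refine ⟨a, fun k => ?_⟩
  obtain ⟨k', hk', hkk'⟩ := hinf.exists_gt k
  have hk'a : g k' = a := hk'
  have := hg k'
  rw [hk'a] at this
  exact this.anti hkk'.le

lemma biExt_mem_lang {w : List A} (hbe : BiExt F w) :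
    ∃ x : ℤ → A, x ∈ zShift F ∧ occursIn w x := by
  classical
  -- a default element of A
  obtain ⟨u₁, v₁, hu₁, -, -⟩ := hbe 1
  have hu₁ne : u₁ ≠ [] := by intro h; rw [h] at hu₁; simp at hu₁
  obtain ⟨a₀, -, -⟩ := List.exists_cons_of_ne_nil hu₁ne
  set m := w.length with hm
  -- the iterative two-sided extension
  have hstep : ∀ p : List A × List A, BiExt F (p.1.reverse ++ w ++ p.2) →
      ∃ ab : A × A, BiExt F ((p.1 ++ [ab.1]).reverse ++ w ++ (p.2 ++ [ab.2])) := by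
    intro p hp
    obtain ⟨a, ha⟩ := biExt_cons_left hp
    obtain ⟨b, hb⟩ := biExt_cons_right ha
    refine ⟨(a, b), ?_⟩
    have : (p.1 ++ [a]).reverse ++ w ++ (p.2 ++ [b])
        = (a :: (p.1.reverse ++ w ++ p.2)) ++ [b] := by
      simp [List.append_assoc]
    rw [this]
    exact hb
  let QS : ℕ → {p : List A × List A // BiExt F (p.1.reverse ++ w ++ p.2)} := fun k =>
    Nat.rec ⟨([], []), by simpa using hbe⟩
      (fun k ih => ⟨(ih.1.1 ++ [(hstep ih.1 ih.2).choose.1],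
         ih.1.2 ++ [(hstep ih.1 ih.2).choose.2]), (hstep ih.1 ih.2).choose_spec⟩) k
  set Q : ℕ → List A := fun k => (QS k).1.1 with hQ
  set S : ℕ → List A := fun k => (QS k).1.2 with hS
  have hQ0 : Q 0 = [] := rfl
  have hS0 : S 0 = [] := rfl
  have hQsucc : ∀ k, ∃ a, Q (k + 1) = Q k ++ [a] := fun k => ⟨_, rfl⟩
  have hSsucc : ∀ k, ∃ b, S (k + 1) = S k ++ [b] := fun k => ⟨_, rfl⟩
  have hQlen : ∀ k, (Q k).length = k := by
    intro k
    induction k with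
    | zero => simp [hQ0]
    | succ k ih => obtain ⟨a, ha⟩ := hQsucc k; rw [ha]; simp [ih]
  have hSlen : ∀ k, (S k).length = k := by
    intro k
    induction k with
    | zero => simp [hS0]
    | succ k ih => obtain ⟨b, hb⟩ := hSsucc k; rw [hb]; simp [ih]
  have hbeW : ∀ k, BiExt F ((Q k).reverse ++ w ++ S k) := fun k => (QS k).2
  have hQpre : ∀ k k', k ≤ k' → Q k <+: Q k' := by
    intro k k' hkk
    induction k', hkk using Nat.le_induction with
    | base => exact List.prefix_refl _
    | succ n hn ih =>
      obtain ⟨a, ha⟩ := hQsucc n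
      rw [ha]
      exact ih.trans (List.prefix_append _ _)
  have hSpre : ∀ k k', k ≤ k' → S k <+: S k' := by
    intro k k' hkk
    induction k', hkk using Nat.le_induction with
    | base => exact List.prefix_refl _
    | succ n hn ih =>
      obtain ⟨b, hb⟩ := hSsucc n
      rw [hb]
      exact ih.trans (List.prefix_append _ _)
  have hQget : ∀ k k' j, k ≤ k' → j < k → (Q k).getD j a₀ = (Q k').getD j a₀ := by
    intro k k' j hkk hj
    rw [List.getD_eq_getElem _ _ (by rw [hQlen]; exact hj),
      List.getD_eq_getElem _ _ (by rw [hQlen]; omega)]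
    exact (hQpre k k' hkk).getElem (by rw [hQlen]; exact hj)
  have hSget : ∀ k k' j, k ≤ k' → j < k → (S k).getD j a₀ = (S k').getD j a₀ := by
    intro k k' j hkk hj
    rw [List.getD_eq_getElem _ _ (by rw [hSlen]; exact hj),
      List.getD_eq_getElem _ _ (by rw [hSlen]; omega)]
    exact (hSpre k k' hkk).getElem (by rw [hSlen]; exact hj)
  -- the configuration
  set x : ℤ → A := fun i =>
    if i < 0 then (Q (-i).toNat).getD ((-i).toNat - 1) a₀
    else if i.toNat < m then w.getD i.toNat a₀
    else (S (i.toNat - m + 1)).getD (i.toNat - m) a₀ with hx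
  set Wd : ℕ → List A := fun k => (Q k).reverse ++ w ++ S k with hWd
  have hWdlen : ∀ k, (Wd k).length = k + m + k := by
    intro k; simp [hWd, hQlen, hSlen, hm]; omega
  -- the window lemma
  have hwindow : ∀ k j, j < 2 * k + m → x ((j : ℤ) - (k : ℤ)) = (Wd k).getD j a₀ := by
    intro k j hj
    have hWlen := hWdlen k
    have hgetD : (Wd k).getD j a₀ = (Wd k)[j]'(by omega) :=
      List.getD_eq_getElem _ _ (by omega)
    rcases lt_or_ge j k with hjk | hjk
    · -- left region
      have hneg : (j : ℤ) - k < 0 := by omega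
      have htn : (-((j : ℤ) - k)).toNat = k - j := by omega
      simp only [hx, if_pos hneg, htn]
      have hx1 : (Q (k - j)).getD (k - j - 1) a₀ = (Q k).getD (k - j - 1) a₀ :=
        hQget (k - j) k (k - j - 1) (by omega) (by omega)
      rw [hx1, hgetD]
      have h1 : (Wd k)[j]'(by omega) = ((Q k).reverse ++ w)[j]'(by simp [hQlen, hm]; omega) := by
        exact List.getElem_append_left (by simp [hQlen, hm]; omega)
      have h2 : ((Q k).reverse ++ w)[j]'(by simp [hQlen, hm]; omega)
          = (Q k).reverse[j]'(by simp [hQlen]; omega) :=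
        List.getElem_append_left (by simp [hQlen]; omega)
      rw [h1, h2, List.getElem_reverse]
      rw [List.getD_eq_getElem _ _ (by rw [hQlen]; omega)]
      congr 1
      rw [hQlen]
      omega
    rcases lt_or_ge j (k + m) with hjm | hjm
    · -- middle region
      have hpos : ¬ ((j : ℤ) - k < 0) := by omega
      have htn : ((j : ℤ) - k).toNat = j - k := by omega
      simp only [hx, if_neg hpos, htn, if_pos (show j - k < m by omega)]
      rw [hgetD]
      have h1 : (Wd k)[j]'(by omega) = ((Q k).reverse ++ w)[j]'(by simp [hQlen, hm]; omega) := by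
        exact List.getElem_append_left (by simp [hQlen, hm]; omega)
      have h2 : ((Q k).reverse ++ w)[j]'(by simp [hQlen, hm]; omega)
          = w[j - (Q k).reverse.length]'(by simp [hQlen, hm]; omega) :=
        List.getElem_append_right (by simp [hQlen]; omega)
      rw [h1, h2, List.getD_eq_getElem _ _ (by rw [← hm]; omega)]
      congr 1
      simp [hQlen]
    · -- right region
      have hpos : ¬ ((j : ℤ) - k < 0) := by omega
      have htn : ((j : ℤ) - k).toNat = j - k := by omega
      simp only [hx, if_neg hpos, htn, if_neg (show ¬ (j - k < m) by omega)]
      have hx1 : (S (j - k - m + 1)).getD (j - k - m) a₀ = (S k).getD (j - k - m) a₀ :=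
        hSget (j - k - m + 1) k (j - k - m) (by omega) (by omega)
      rw [hx1, hgetD]
      have h1 : (Wd k)[j]'(by omega)
          = (S k)[j - ((Q k).reverse ++ w).length]'(by simp [hQlen, hSlen, hm]; omega) := by
        exact List.getElem_append_right (by simp [hQlen, hm]; omega)
      rw [h1, List.getD_eq_getElem _ _ (by rw [hSlen]; omega)]
      congr 1
      simp [hQlen, hm]
      omega
  refine ⟨x, ?_, ?_⟩
  · -- x avoids F
    intro f hf hocc
    obtain ⟨g, hg⟩ := hocc
    set L := f.length with hL
    set k := m + L + g.natAbs with hk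
    have hg1 : -(k : ℤ) ≤ g := by rw [hk]; omega
    have hg2 : g + L ≤ k := by rw [hk]; omega
    set o := (g + k).toNat with ho
    have hoz : (o : ℤ) = g + k := Int.toNat_of_nonneg (by omega)
    have hoL : o + L ≤ 2 * k + m := by omega
    have hWlen := hWdlen k
    have hfeq : f = ((Wd k).drop o).take L := by
      apply List.ext_getElem
      · simp [hWlen]
        omega
      · intro n h₁ h₂
        rw [List.getElem_take, List.getElem_drop]
        have h3 : (Wd k)[o + n]'(by omega) = (Wd k).getD (o + n) a₀ :=
          (List.getD_eq_getElem _ _ (by omega)).symm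
        rw [h3, ← hwindow k (o + n) (by omega)]
        have h4 : ((o + n : ℕ) : ℤ) - k = g + n := by push_cast; omega
        rw [h4]
        rw [hg n (by omega)]
        simp [List.get_eq_getElem]
    have havoid : WAvoids F (Wd k) := (hbeW k).avoids
    apply havoid f hf
    rw [hfeq]
    exact ((List.take_prefix _ _).isInfix).trans (List.drop_suffix _ _).isInfix
  · -- w occurs in x at 0
    refine ⟨0, fun i hi => ?_⟩
    rw [zero_add]
    simp only [hx]
    have h1 : ¬ ((i : ℤ) < 0) := by omega
    have h2 : ((i : ℤ)).toNat = i := by omega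
    simp only [if_neg h1, h2, if_pos (show i < m from hi)]
    rw [List.getD_eq_getElem _ _ (by rw [← hm]; exact hi)]
    simp [List.get_eq_getElem]


open Classical in
noncomputable def Ls (F : Set (List A)) (n : ℕ) : Finset (List A) :=
  (allW A n).filter (fun w => ∃ x ∈ zShift F, occursIn w x)

lemma mem_Ls {F : Set (List A)} {n : ℕ} {w : List A} :
    w ∈ Ls F n ↔ w.length = n ∧ ∃ x ∈ zShift F, occursIn w x := by
  classical
  simp [Ls, mem_allW, Finset.mem_filter]

lemma lang_eq_Ls (F : Set (List A)) (n : ℕ) : lang (zShift F) n = ↑(Ls F n) := by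
  ext w
  simp [lang, mem_Ls]

lemma pow_le_Ls_card (hne : ∀ f ∈ F, f ≠ []) (hβ : 0 < β)
    (hsum : Summable fun f : F => β ^ (1 - (f.1.length : ℤ)))
    (hcond : (Fintype.card A : ℝ) - ∑' f : F, β ^ (1 - (f.1.length : ℤ)) ≥ β) (m : ℕ) :
    β ^ m ≤ ((Ls F m).card : ℝ) := by
  obtain ⟨k₀, hcard, hcore⟩ := exists_core hne hβ hsum hcond m
  have hsub : Ss F k₀ m ⊆ Ls F m := by
    intro w hw
    obtain ⟨hlen, hbe⟩ := hcore w hw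
    obtain ⟨x, hx, hocc⟩ := biExt_mem_lang hbe
    exact mem_Ls.2 ⟨hlen, x, hx, hocc⟩
  calc β ^ m ≤ ((Ss F k₀ m).card : ℝ) := hcard
    _ ≤ ((Ls F m).card : ℝ) := by exact_mod_cast Finset.card_le_card hsub

lemma Ls_card_pos (hne : ∀ f ∈ F, f ≠ []) (hβ : 0 < β)
    (hsum : Summable fun f : F => β ^ (1 - (f.1.length : ℤ)))
    (hcond : (Fintype.card A : ℝ) - ∑' f : F, β ^ (1 - (f.1.length : ℤ)) ≥ β) (m : ℕ) :
    1 ≤ (Ls F m).card := by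
  have h := pow_le_Ls_card hne hβ hsum hcond m
  rcases Nat.eq_zero_or_pos (Ls F m).card with h0 | hp
  · rw [h0] at h
    norm_num at h
    nlinarith [pow_pos hβ m]
  · exact hp

lemma Ls_submul (F : Set (List A)) (a b : ℕ) :
    (Ls F (a + b)).card ≤ (Ls F a).card * (Ls F b).card := by
  classical
  have h : (Ls F (a + b)).card ≤ ((Ls F a) ×ˢ (Ls F b)).card := by
    apply Finset.card_le_card_of_injOn (fun w => (w.take a, w.drop a))
    · intro w hw
      obtain ⟨hlen, x, hx, g, hocc⟩ := mem_Ls.1 hw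
      rw [Finset.mem_coe, Finset.mem_product]
      constructor
      · rw [mem_Ls]
        refine ⟨by rw [List.length_take, hlen]; omega, x, hx, g, ?_⟩
        intro i hi
        have hi' : i < w.length := by rw [List.length_take, hlen] at hi; omega
        rw [hocc i hi']
        simp [List.get_eq_getElem, List.getElem_take]
      · rw [mem_Ls]
        refine ⟨by rw [List.length_drop, hlen]; omega, x, hx, g + a, ?_⟩
        intro i hi
        have hi' : a + i < w.length := by rw [List.length_drop, hlen] at hi; omega
        have h4 : g + (a : ℤ) + i = g + ((a + i : ℕ) : ℤ) := by push_cast; ring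
        rw [h4, hocc (a + i) hi']
        simp [List.get_eq_getElem, List.getElem_drop]
    · intro p hp q hq heq
      simp only [Prod.mk.injEq] at heq
      rw [← List.take_append_drop a p, ← List.take_append_drop a q, heq.1, heq.2]
  rw [Finset.card_product] at h
  exact h

end Aux

/-- If `|A| - ∑_{f∈F} β^{1-|f|} ≥ β` for a set of forbidden words `F`, then for every `n`
there are at least `β^n` words of length `n` avoiding all factors in `F`; in particular
the entropy of `X_F` is at least `log β`. -/
theorem word_count_and_entropy {A : Type*} [Fintype A]
    (F : Set (List A)) (hne : ∀ f ∈ F, f ≠ [])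
    (β : ℝ) (hβ : 0 < β)
    (hsum : Summable fun f : F => β ^ (1 - (f.1.length : ℤ)))
    (hcond : (Fintype.card A : ℝ) - ∑' f : F, β ^ (1 - (f.1.length : ℤ)) ≥ β) :
    (∀ n : ℕ,
      β ^ n ≤ (({w : List A | w.length = n ∧ ∀ u ∈ F, ¬ u <:+: w}).ncard : ℝ)) ∧
    ∃ h₀ : ℝ, Filter.Tendsto
        (fun n : ℕ => Real.log ((lang (zShift F) n).ncard) / n)
        Filter.atTop (nhds h₀) ∧ Real.log β ≤ h₀ := by
  constructor
  · intro n
    have hset : {w : List A | w.length = n ∧ ∀ u ∈ F, ¬ u <:+: w} = ↑(Gs F n) := by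
      ext w
      simp [mem_Gs, WAvoids]
    rw [hset, Set.ncard_coe_finset]
    exact pow_le_Gs_card hne hβ hsum hcond n
  · set u : ℕ → ℝ := fun n => Real.log ((Ls F n).card) with hu
    have hL1 : ∀ n, 1 ≤ (Ls F n).card := Ls_card_pos hne hβ hsum hcond
    have hsubadd : Subadditive u := by
      intro a b
      rw [hu]
      have hcast : (1:ℝ) ≤ ((Ls F a).card : ℝ) := by exact_mod_cast hL1 a
      have hcast' : (1:ℝ) ≤ ((Ls F b).card : ℝ) := by exact_mod_cast hL1 b
      calc Real.log ((Ls F (a+b)).card)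
          ≤ Real.log (((Ls F a).card : ℝ) * ((Ls F b).card : ℝ)) := by
            apply Real.log_le_log (by exact_mod_cast hL1 (a+b))
            exact_mod_cast Ls_submul F a b
        _ = Real.log ((Ls F a).card) + Real.log ((Ls F b).card) :=
            Real.log_mul (by linarith) (by linarith)
    have hbdd : BddBelow (Set.range fun n => u n / n) := by
      refine ⟨0, ?_⟩
      rintro y ⟨n, rfl⟩
      apply div_nonneg _ (Nat.cast_nonneg n)
      exact Real.log_nonneg (by exact_mod_cast hL1 n)
    refine ⟨hsubadd.lim, ?_, ?_⟩
    · have htend := hsubadd.tendsto_lim hbdd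
      have hfun : (fun n : ℕ => Real.log ((lang (zShift F) n).ncard) / n)
          = fun n : ℕ => u n / n := by
        funext n
        rw [lang_eq_Ls, Set.ncard_coe_finset]
      rw [hfun]
      exact htend
    · rw [Subadditive.lim]
      apply le_csInf ⟨_, Set.mem_image_of_mem (fun n : ℕ => u n / (n:ℝ)) (Set.self_mem_Ici (a := (1:ℕ)))⟩
      rintro y ⟨n, hn, rfl⟩
      simp only [Set.mem_Ici] at hn
      have hnpos : (0:ℝ) < n := by exact_mod_cast hn
      rw [le_div_iff₀ hnpos]
      calc Real.log β * n = Real.log (β ^ n) := by rw [Real.log_pow]; ring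
        _ ≤ u n := Real.log_le_log (pow_pos hβ n) (pow_le_Ls_card hne hβ hsum hcond n)
end

section
/- Let F be a nontrivial set of connected patterns over ℤ (F contains at least one pattern of length ≥ 2). If real β > 0 and integer k ≥ 1 satisfy |A| − Σ_{f∈F} β^{1−|f|} > β + k − 1 (Pavlov's condition), then there exists β' > k satisfying |A| − Σ_{f∈F} (β')^{1−|f|} ≥ β'. -/
lemma zpow_anti_base {x y : ℝ} (hx : 0 < x) (hxy : x ≤ y) {m : ℤ} (hm : m ≤ 0) :
    y ^ m ≤ x ^ m := by
  obtain ⟨n, rfl⟩ : ∃ n : ℕ, m = -n := ⟨(-m).toNat, by omega⟩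
  rw [zpow_neg, zpow_neg, zpow_natCast, zpow_natCast]
  exact inv_anti₀ (pow_pos hx _) (pow_le_pow_left₀ hx.le hxy _)

/-- Pavlov's condition implies ours with a strictly better bound: if `F` is a nontrivial
set of forbidden words and `|A| - ∑_{f∈F} β^{1-|f|} > β + k - 1` for some `β > 0` and
integer `k ≥ 1`, then there is `β' > k` with `|A| - ∑_{f∈F} (β')^{1-|f|} ≥ β'`. -/
theorem pavlov_implies_counting {A : Type*} [Fintype A]
    (F : Set (List A)) (hne : ∀ f ∈ F, f ≠ [])
    (hnontriv : ∃ f ∈ F, 2 ≤ f.length)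
    (β : ℝ) (hβ : 0 < β) (k : ℕ) (hk : 1 ≤ k)
    (hsum : Summable fun f : F => β ^ (1 - (f.1.length : ℤ)))
    (hpav : (Fintype.card A : ℝ) - ∑' f : F, β ^ (1 - (f.1.length : ℤ)) > β + k - 1) :
    ∃ β' : ℝ, (k : ℝ) < β' ∧
      (Summable fun f : F => β' ^ (1 - (f.1.length : ℤ))) ∧
      (Fintype.card A : ℝ) - ∑' f : F, β' ^ (1 - (f.1.length : ℤ)) ≥ β' := by
  obtain ⟨f₀, hf₀F, hf₀len⟩ := hnontriv
  have hlen : ∀ f : F, (1 : ℤ) - (f.1.length : ℤ) ≤ 0 := by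
    intro f
    have h1 : f.1 ≠ [] := hne f.1 f.2
    have h2 : 0 < f.1.length := List.length_pos_iff.mpr h1
    omega
  -- Step 1: find b ≥ 1 satisfying Pavlov's condition
  have key : ∃ b : ℝ, 1 ≤ b ∧ (Summable fun f : F => b ^ (1 - (f.1.length : ℤ))) ∧
      (Fintype.card A : ℝ) - ∑' f : F, b ^ (1 - (f.1.length : ℤ)) > b + (k : ℝ) - 1 := by
    rcases le_or_gt 1 β with h1 | h1
    · exact ⟨β, h1, hsum, hpav⟩
    · have hterm1 : ∀ f : F, (1 : ℝ) ≤ β ^ (1 - (f.1.length : ℤ)) := fun f =>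
        one_le_zpow_of_nonpos₀ hβ h1.le (hlen f)
      -- F is finite
      have hfin : Finite F := by
        by_contra hinf
        rw [not_finite_iff_infinite] at hinf
        have ht := hsum.tendsto_cofinite_zero
        have hev : ∀ᶠ f : F in Filter.cofinite, β ^ (1 - (f.1.length : ℤ)) < 1 := by
          have : Set.Iio (1 : ℝ) ∈ nhds (0 : ℝ) := Iio_mem_nhds one_pos
          exact ht.eventually (by filter_upwards [this] with x hx using hx)
        obtain ⟨f, hf⟩ := hev.exists
        exact absurd (hterm1 f) (not_le.mpr hf)
      haveI := hfin
      have hs1 : Summable fun f : F => (1 : ℝ) ^ (1 - (f.1.length : ℤ)) := .of_finite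
      have hsc : Summable fun _ : F => (1 : ℝ) := .of_finite
      refine ⟨1, le_refl 1, hs1, ?_⟩
      have hS1 : ∑' f : F, (1 : ℝ) ^ (1 - (f.1.length : ℤ)) = ∑' _ : F, (1 : ℝ) := by
        congr 1; ext f; rw [one_zpow]
      -- S(1) ≤ S(β) + β - 1
      set f₀' : F := ⟨f₀, hf₀F⟩
      have hβf₀ : β⁻¹ ≤ β ^ (1 - (f₀'.1.length : ℤ)) := by
        have : (1 : ℤ) - (f₀'.1.length : ℤ) ≤ -1 := by
          have : (2 : ℕ) ≤ f₀'.1.length := hf₀len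
          omega
        calc β⁻¹ = β ^ (-1 : ℤ) := (zpow_neg_one β).symm
          _ ≤ β ^ (1 - (f₀'.1.length : ℤ)) := zpow_le_zpow_right_of_le_one₀ hβ h1.le this
      have hdiff : (β ^ (1 - (f₀'.1.length : ℤ)) - 1) ≤
          ∑' f : F, (β ^ (1 - (f.1.length : ℤ)) - 1) :=
        Summable.le_tsum (hsum.sub hsc) f₀' (fun f _ => by linarith [hterm1 f])
      have hsub : ∑' f : F, (β ^ (1 - (f.1.length : ℤ)) - 1)
          = (∑' f : F, β ^ (1 - (f.1.length : ℤ))) - ∑' _ : F, (1 : ℝ) :=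
        Summable.tsum_sub hsum hsc
      have hamgm : 1 - β ≤ β⁻¹ - 1 := by
        have h0 : β * β⁻¹ = 1 := mul_inv_cancel₀ hβ.ne'
        nlinarith [sq_nonneg (1 - β)]
      rw [hS1]
      have := hpav
      linarith [hdiff, hsub.symm, hamgm, hβf₀]
  obtain ⟨b, hb1, hbs, hbineq⟩ := key
  have hk' : (1 : ℝ) ≤ (k : ℝ) := by exact_mod_cast hk
  set S := ∑' f : F, b ^ (1 - (f.1.length : ℤ)) with hS
  refine ⟨(Fintype.card A : ℝ) - S, ?_, ?_, ?_⟩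
  · have : ((k : ℝ)) ≤ b + (k : ℝ) - 1 := by linarith
    linarith
  · refine Summable.of_nonneg_of_le (fun f => zpow_nonneg (by linarith) _)
      (fun f => zpow_anti_base (lt_of_lt_of_le zero_lt_one hb1) (by linarith) (hlen f)) hbs
  · have hb' : b ≤ (Fintype.card A : ℝ) - S := by
      linarith
    have hb0 : (0 : ℝ) < b := lt_of_lt_of_le zero_lt_one hb1
    have hsum' : Summable fun f : F => ((Fintype.card A : ℝ) - S) ^ (1 - (f.1.length : ℤ)) :=
      Summable.of_nonneg_of_le (fun f => zpow_nonneg (by linarith) _)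
        (fun f => zpow_anti_base hb0 hb' (hlen f)) hbs
    have hle : ∑' f : F, ((Fintype.card A : ℝ) - S) ^ (1 - (f.1.length : ℤ)) ≤ S :=
      Summable.tsum_le_tsum (fun f => zpow_anti_base hb0 hb' (hlen f)) hsum' hbs
    linarith
end

section
/- Let F be a set of connected patterns over ℤ with alphabet A, and write F_n = {f ∈ F : |f| = n}. If Σ_{n≥1} |F_n|·(3/|A|)^n < 1/5, then h(X_F) > log(14|A|/15). -/
set_option linter.unusedSectionVars false


open Set Filter

section Dev
variable {A : Type*} [Fintype A] [Nonempty A]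

def MatchAt (x : ℤ → A) (f : List A) (g : ℤ) : Prop :=
  ∀ i : ℕ, ∀ hi : i < f.length, x (g + i) = f.get ⟨i, hi⟩

variable (F : Set (List A)) (d : A)

/-- patterns supported on `T` with no forbidden word occurring inside `T`. -/
def admSet (T : Finset ℤ) : Set (ℤ → A) :=
  {x | (∀ i, i ∉ T → x i = d) ∧
    ∀ f ∈ F, ∀ g : ℤ, (∀ i : ℕ, i < f.length → g + (i : ℤ) ∈ T) → ¬ MatchAt x f g}

def maskF (T : Finset ℤ) (x : ℤ → A) : ℤ → A := fun i => if i ∈ T then x i else d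

variable {F d}

lemma maskF_mem {T S : Finset ℤ} {x : ℤ → A} (hx : x ∈ admSet F d T) (hST : S ⊆ T) :
    maskF d S x ∈ admSet F d S := by
  obtain ⟨hsupp, havoid⟩ := hx
  constructor
  · intro i hi
    simp [maskF, hi]
  · intro f hf g hwin hmatch
    refine havoid f hf g (fun i hi => hST (hwin i hi)) ?_
    intro i hi
    have := hmatch i hi
    rwa [maskF, if_pos (hwin i hi)] at this

lemma admSet_finite (T : Finset ℤ) : (admSet F d T).Finite := by
  have : Finite ((admSet F d T : Set (ℤ → A))) := by
    refine Finite.of_injective (fun x => (fun i : T => (x : ℤ → A) i)) ?_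
    intro x y hxy
    ext i
    by_cases hi : i ∈ T
    · exact congrFun hxy ⟨i, hi⟩
    · rw [x.2.1 i hi, y.2.1 i hi]
  exact Set.finite_coe_iff.mp this

lemma ncard_prod (α β : Type*) (s : Set α) (t : Set β) :
    (s ×ˢ t).ncard = s.ncard * t.ncard := by
  rw [← Nat.card_coe_set_eq, ← Nat.card_coe_set_eq, ← Nat.card_coe_set_eq, ← Nat.card_prod]
  exact Nat.card_congr (Equiv.Set.prod s t)

lemma ncard_le_sum_of_cover {α : Type*} {ι : Type*} (I : Finset ι) :
    ∀ (s : Set α) (t : ι → Set α), (∀ i, (t i).Finite) → (s ⊆ ⋃ i ∈ I, t i) →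
    s.ncard ≤ ∑ i ∈ I, (t i).ncard := by
  classical
  induction I using Finset.induction_on with
  | empty => intro s t _ hs; simp only [Finset.notMem_empty, iUnion_of_empty, iUnion_empty,
      subset_empty_iff] at hs; simp [hs]
  | @insert a I ha IH =>
    intro s t htf hs
    have hsub : s ⊆ (s ∩ t a) ∪ (s \ t a) := by
      intro x hx; by_cases h : x ∈ t a
      · exact Or.inl ⟨hx, h⟩
      · exact Or.inr ⟨hx, h⟩
    have hfin1 : (s ∩ t a).Finite := (htf a).subset (inter_subset_right)
    have hsd : (s \ t a) ⊆ ⋃ i ∈ I, t i := by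
      intro x hx
      have := hs hx.1
      simp only [Finset.mem_insert, mem_iUnion, exists_prop] at this ⊢
      obtain ⟨i, hi, hxi⟩ := this
      rcases hi with rfl | hi
      · exact absurd hxi hx.2
      · exact ⟨i, hi, hxi⟩
    have hfin2 : (s \ t a).Finite :=
      (Set.Finite.biUnion I.finite_toSet (fun i _ => htf i)).subset hsd
    calc s.ncard ≤ ((s ∩ t a) ∪ (s \ t a)).ncard := by
          apply Set.ncard_le_ncard hsub (hfin1.union hfin2)
      _ ≤ (s ∩ t a).ncard + (s \ t a).ncard := Set.ncard_union_le _ _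
      _ ≤ (t a).ncard + ∑ i ∈ I, (t i).ncard :=
          add_le_add (Set.ncard_le_ncard inter_subset_right (htf a)) (IH _ _ htf hsd)
      _ = ∑ i ∈ insert a I, (t i).ncard := by rw [Finset.sum_insert ha]

end Dev
section Dev2
variable {A : Type*} [Fintype A] [Nonempty A] {F : Set (List A)} {d : A}

lemma finite_len_le (m : ℕ) : {l : List A | l.length ≤ m}.Finite := by
  have : Finite {l : List A | l.length ≤ m} := by
    refine Finite.of_injective (fun l => (fun i : Fin m => (l : List A)[(i : ℕ)]?)) ?_
    intro l l' h
    apply Subtype.ext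
    apply List.ext_getElem?
    intro n
    by_cases hn : n < m
    · exact congrFun h ⟨n, hn⟩
    · rw [List.getElem?_eq_none, List.getElem?_eq_none]
      · exact le_trans l'.2 (not_lt.1 hn)
      · exact le_trans l.2 (not_lt.1 hn)
  exact Set.finite_coe_iff.mp this

lemma key (γ : ℝ) (hγ : 0 < γ)
    (hbudget : ∀ M : Finset (List A), ↑M ⊆ F →
      ∑ f ∈ M, (f.length : ℝ) * (1 / γ) ^ (f.length - 1) ≤ (Fintype.card A : ℝ) - γ) :
    ∀ (n : ℕ) (T : Finset ℤ), T.card ≤ n → ∀ g ∉ T,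
      γ * ((admSet F d T).ncard : ℝ) ≤ ((admSet F d (insert g T)).ncard : ℝ) := by
  classical
  intro n
  induction n using Nat.strong_induction_on with
  | _ n IH =>
  intro T hTn g hg
  have chain : ∀ W : Finset ℤ, W ⊆ T →
      γ ^ W.card * ((admSet F d (T \ W)).ncard : ℝ) ≤ ((admSet F d T).ncard : ℝ) := by
    intro W
    induction W using Finset.induction_on with
    | empty => intro _; simp
    | @insert w W hwW IHW =>
      intro hins
      have hwT : w ∈ T := hins (Finset.mem_insert_self w W)
      have hWT : W ⊆ T := fun y hy => hins (Finset.mem_insert_of_mem hy)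
      have hTpos : 1 ≤ T.card := Finset.card_pos.2 ⟨w, hwT⟩
      have hw' : w ∈ T \ W := Finset.mem_sdiff.2 ⟨hwT, hwW⟩
      have h1 : T \ insert w W = (T \ W).erase w := by
        ext y
        simp only [Finset.mem_sdiff, Finset.mem_insert, Finset.mem_erase]
        tauto
      have h2 : insert w ((T \ W).erase w) = T \ W := Finset.insert_erase hw'
      have hcard : ((T \ W).erase w).card ≤ n - 1 := by
        have h5 := Finset.card_erase_of_mem hw'
        have h4 : (T \ W).card ≤ T.card := Finset.card_le_card Finset.sdiff_subset
        omega
      have hkey : γ * ((admSet F d ((T \ W).erase w)).ncard : ℝ)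
          ≤ ((admSet F d (T \ W)).ncard : ℝ) := by
        have := IH (n - 1) (by omega) ((T \ W).erase w) hcard w (Finset.notMem_erase w _)
        rwa [h2] at this
      calc γ ^ (insert w W).card * ((admSet F d (T \ insert w W)).ncard : ℝ)
          = γ ^ W.card * (γ * ((admSet F d ((T \ W).erase w)).ncard : ℝ)) := by
            rw [Finset.card_insert_of_notMem hwW, h1]; ring
        _ ≤ γ ^ W.card * ((admSet F d (T \ W)).ncard : ℝ) :=
            mul_le_mul_of_nonneg_left hkey (by positivity)
        _ ≤ ((admSet F d T).ncard : ℝ) := IHW hWT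
  set pairs : Set ((ℤ → A) × A) := (admSet F d T) ×ˢ (Set.univ : Set A) with hpairs
  have hpairsfin : pairs.Finite := (admSet_finite T).prod Set.finite_univ
  set upd : (ℤ → A) × A → (ℤ → A) := fun p => Function.update p.1 g p.2 with hupd
  set good : Set ((ℤ → A) × A) :=
    {p | p ∈ pairs ∧ upd p ∈ admSet F d (insert g T)} with hgood
  set Fbig : Finset (List A) :=
    Set.Finite.toFinset (s := {f | f ∈ F ∧ f.length ≤ T.card + 1})
      ((finite_len_le (T.card + 1)).subset (fun f hf => hf.2)) with hFbig
  have hmemFbig : ∀ f : List A, f ∈ Fbig ↔ (f ∈ F ∧ f.length ≤ T.card + 1) := by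
    intro f
    rw [hFbig, Set.Finite.mem_toFinset]
    rfl
  have hFbigF : ↑Fbig ⊆ F := by
    intro f hf
    exact ((hmemFbig f).1 hf).1
  set win : List A → ℕ → Finset ℤ :=
    fun f j => Finset.image (fun i : ℕ => g - (j : ℤ) + (i : ℤ)) (Finset.range f.length)
    with hwin
  set BadVia : List A → ℕ → Set ((ℤ → A) × A) := fun f j =>
    {p | p ∈ pairs ∧ j < f.length ∧
      (∀ i : ℕ, i < f.length → g - (j : ℤ) + (i : ℤ) ∈ insert g T)
      ∧ MatchAt (upd p) f (g - (j : ℤ))} with hBadVia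
  set σidx : Finset ((_ : List A) × ℕ) := Fbig.sigma (fun f => Finset.range f.length) with hσ
  have h1 : pairs.ncard = (admSet F d T).ncard * Fintype.card A := by
    rw [hpairs, _root_.ncard_prod, Set.ncard_univ, Nat.card_eq_fintype_card]
  have h2 : pairs.ncard ≤ good.ncard + (pairs \ good).ncard := by
    have hsub : pairs ⊆ good ∪ (pairs \ good) := by
      intro p hp
      by_cases h : p ∈ good
      · exact Or.inl h
      · exact Or.inr ⟨hp, h⟩
    calc pairs.ncard ≤ (good ∪ (pairs \ good)).ncard :=
          Set.ncard_le_ncard hsub ((hpairsfin.subset (fun p hp => hp.1)).union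
            (hpairsfin.subset (fun p hp => hp.1)))
      _ ≤ _ := Set.ncard_union_le _ _
  have h3 : good.ncard ≤ (admSet F d (insert g T)).ncard := by
    apply Set.ncard_le_ncard_of_injOn upd (fun p hp => hp.2) ?_ (admSet_finite _)
    intro p hp q hq hpq
    have hp1 : p.1 ∈ admSet F d T := (Set.mem_prod.1 hp.1).1
    have hq1 : q.1 ∈ admSet F d T := (Set.mem_prod.1 hq.1).1
    have h22 : p.2 = q.2 := by
      have := congrFun hpq g
      simpa [hupd, Function.update_self] using this
    have h11 : p.1 = q.1 := by
      funext i
      by_cases hig : i = g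
      · subst hig
        rw [hp1.1 i hg, hq1.1 i hg]
      · have := congrFun hpq i
        simpa [hupd, Function.update_of_ne hig] using this
    exact Prod.ext h11 h22
  have h4 : (pairs \ good).ncard ≤ ∑ fj ∈ σidx, (BadVia fj.1 fj.2).ncard := by
    apply ncard_le_sum_of_cover σidx _ _
      (fun fj => hpairsfin.subset (fun p hp => hp.1))
    intro p hp
    obtain ⟨hpp, hpg⟩ := hp
    have hnot : upd p ∉ admSet F d (insert g T) := fun h => hpg ⟨hpp, h⟩
    have hp1 : p.1 ∈ admSet F d T := (Set.mem_prod.1 hpp).1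
    have hsupp : ∀ i, i ∉ insert g T → (upd p) i = d := by
      intro i hi
      have hig : i ≠ g := fun h => hi (h ▸ Finset.mem_insert_self g T)
      simp only [hupd, Function.update_of_ne hig]
      exact hp1.1 i (fun hiT => hi (Finset.mem_insert_of_mem hiT))
    have hav : ¬ (∀ f ∈ F, ∀ g₀ : ℤ,
        (∀ i : ℕ, i < f.length → g₀ + (i : ℤ) ∈ insert g T) → ¬ MatchAt (upd p) f g₀) :=
      fun h => hnot ⟨hsupp, h⟩
    push_neg at hav
    obtain ⟨f, hfF, g₀, hwin0, hmatch⟩ := hav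
    by_cases hcase : ∃ j : ℕ, j < f.length ∧ g₀ + (j : ℤ) = g
    · obtain ⟨j, hj, hgj⟩ := hcase
      have hg₀ : g₀ = g - (j : ℤ) := by omega
      have hflen : f.length ≤ T.card + 1 := by
        have hinj : Set.InjOn (fun i : ℕ => g₀ + (i : ℤ)) ↑(Finset.range f.length) := by
          intro a _ b _ hab
          simp only [add_right_inj, Int.natCast_inj] at hab
          exact hab
        have hmaps : ∀ i ∈ Finset.range f.length, g₀ + (i : ℤ) ∈ insert g T := by
          intro i hi
          exact hwin0 i (Finset.mem_range.1 hi)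
        calc f.length = (Finset.range f.length).card := (Finset.card_range _).symm
          _ ≤ (insert g T).card := Finset.card_le_card_of_injOn _ hmaps hinj
          _ = T.card + 1 := Finset.card_insert_of_notMem hg
      have hfFbig : f ∈ Fbig := (hmemFbig f).2 ⟨hfF, hflen⟩
      simp only [Set.mem_iUnion, exists_prop]
      refine ⟨⟨f, j⟩, ?_, ?_⟩
      · rw [hσ, Finset.mem_sigma]
        exact ⟨hfFbig, Finset.mem_range.2 hj⟩
      · subst hg₀
        exact ⟨hpp, hj, hwin0, hmatch⟩
    · exfalso
      have hwT : ∀ i : ℕ, i < f.length → g₀ + (i : ℤ) ∈ T := by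
        intro i hi
        rcases Finset.mem_insert.1 (hwin0 i hi) with h | h
        · exact absurd ⟨i, hi, h⟩ hcase
        · exact h
      have hmatch' : MatchAt p.1 f g₀ := by
        intro i hi
        have hne2 : g₀ + (i : ℤ) ≠ g := fun h => hcase ⟨i, hi, h⟩
        have := hmatch i hi
        simp only [hupd, Function.update_of_ne hne2] at this
        exact this
      exact hp1.2 f hfF g₀ hwT hmatch'
  have h5 : ∀ fj ∈ σidx, ((BadVia fj.1 fj.2).ncard : ℝ)
      ≤ (1 / γ) ^ (fj.1.length - 1) * ((admSet F d T).ncard : ℝ) := by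
    rintro ⟨f, j⟩ hfj
    rw [hσ, Finset.mem_sigma] at hfj
    obtain ⟨hfFbig, hjr⟩ := hfj
    have hj : j < f.length := Finset.mem_range.1 hjr
    by_cases hwinsub : ∀ i : ℕ, i < f.length → g - (j : ℤ) + (i : ℤ) ∈ insert g T
    · have hcount : (BadVia f j).ncard ≤ (admSet F d (T \ win f j)).ncard := by
        apply Set.ncard_le_ncard_of_injOn (fun p => maskF d (T \ win f j) p.1)
          ?_ ?_ (admSet_finite _)
        · intro p hp
          exact maskF_mem (Set.mem_prod.1 hp.1).1 Finset.sdiff_subset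
        · rintro p hp q hq hpq
          have hp1 : p.1 ∈ admSet F d T := (Set.mem_prod.1 hp.1).1
          have hq1 : q.1 ∈ admSet F d T := (Set.mem_prod.1 hq.1).1
          obtain ⟨-, hjp, -, hmp⟩ := hp
          obtain ⟨-, hjq, -, hmq⟩ := hq
          have hgj : g - (j : ℤ) + (j : ℤ) = g := by ring
          have hp2 : p.2 = f.get ⟨j, hj⟩ := by
            have := hmp j hj
            rw [hgj] at this
            simp only [hupd, Function.update_self] at this
            exact this
          have hq2 : q.2 = f.get ⟨j, hj⟩ := by
            have := hmq j hj
            rw [hgj] at this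
            simp only [hupd, Function.update_self] at this
            exact this
          have h11 : p.1 = q.1 := by
            funext i
            by_cases hiT : i ∈ T
            · by_cases hiw : i ∈ win f j
              · obtain ⟨i', hi', rfl⟩ : ∃ i' : ℕ, i' < f.length ∧ g - (j : ℤ) + (i' : ℤ) = i := by
                  rw [hwin] at hiw
                  simp only [Finset.mem_image, Finset.mem_range] at hiw
                  obtain ⟨i', hi', hie⟩ := hiw
                  exact ⟨i', hi', hie⟩
                have hig : g - (j : ℤ) + (i' : ℤ) ≠ g := fun h => hg (h ▸ hiT)
                have e1 := hmp i' hi'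
                have e2 := hmq i' hi'
                simp only [hupd, Function.update_of_ne hig] at e1 e2
                rw [e1, e2]
              · have := congrFun hpq i
                have himem : i ∈ T \ win f j := Finset.mem_sdiff.2 ⟨hiT, hiw⟩
                simpa [maskF, himem] using this
            · rw [hp1.1 i hiT, hq1.1 i hiT]
          exact Prod.ext h11 (by rw [hp2, hq2])
      have hWsub : (win f j).erase g ⊆ T := by
        intro y hy
        obtain ⟨hyg, hyw⟩ := Finset.mem_erase.1 hy
        rw [hwin] at hyw
        simp only [Finset.mem_image, Finset.mem_range] at hyw
        obtain ⟨i', hi', rfl⟩ := hyw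
        rcases Finset.mem_insert.1 (hwinsub i' hi') with h | h
        · exact absurd h hyg
        · exact h
      have hTwin : T \ win f j = T \ ((win f j).erase g) := by
        ext y
        simp only [Finset.mem_sdiff, Finset.mem_erase]
        constructor
        · rintro ⟨hyT, hyw⟩
          exact ⟨hyT, fun hc => hyw hc.2⟩
        · rintro ⟨hyT, hyw⟩
          refine ⟨hyT, fun hc => ?_⟩
          exact hyw ⟨fun hyg => hg (hyg ▸ hyT), hc⟩
      have hgwin : g ∈ win f j := by
        rw [hwin]
        simp only [Finset.mem_image, Finset.mem_range]
        exact ⟨j, hj, by ring⟩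
      have hwcard : ((win f j).erase g).card = f.length - 1 := by
        rw [Finset.card_erase_of_mem hgwin, hwin]
        rw [Finset.card_image_of_injective _ (fun a b hab => by omega)]
        rw [Finset.card_range]
      have hchain := chain ((win f j).erase g) hWsub
      rw [← hTwin, hwcard] at hchain
      have hpow : (0:ℝ) < γ ^ (f.length - 1) := by positivity
      calc ((BadVia f j).ncard : ℝ) ≤ ((admSet F d (T \ win f j)).ncard : ℝ) := by
            exact_mod_cast hcount
        _ ≤ (1 / γ) ^ (f.length - 1) * ((admSet F d T).ncard : ℝ) := by
            rw [div_pow, one_pow, div_mul_eq_mul_div, le_div_iff₀ hpow]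
            linarith [hchain]
    · have hempty : BadVia f j = ∅ := by
        ext p
        simp only [hBadVia, Set.mem_setOf_eq, Set.mem_empty_iff_false, iff_false, not_and]
        intro _ _ h
        exact absurd h hwinsub
      rw [hempty]
      simp only [Set.ncard_empty, Nat.cast_zero]
      positivity
  have h6 : (∑ fj ∈ σidx, ((BadVia fj.1 fj.2).ncard : ℝ))
      ≤ ((Fintype.card A : ℝ) - γ) * ((admSet F d T).ncard : ℝ) := by
    calc (∑ fj ∈ σidx, ((BadVia fj.1 fj.2).ncard : ℝ))
        ≤ ∑ fj ∈ σidx, (1 / γ) ^ (fj.1.length - 1) * ((admSet F d T).ncard : ℝ) :=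
          Finset.sum_le_sum h5
      _ = (∑ f ∈ Fbig, (f.length : ℝ) * (1 / γ) ^ (f.length - 1))
            * ((admSet F d T).ncard : ℝ) := by
          rw [hσ, Finset.sum_sigma, Finset.sum_mul]
          apply Finset.sum_congr rfl
          intro f _
          simp only [Finset.sum_const, Finset.card_range, nsmul_eq_mul]
          ring
      _ ≤ ((Fintype.card A : ℝ) - γ) * ((admSet F d T).ncard : ℝ) := by
          apply mul_le_mul_of_nonneg_right (hbudget Fbig hFbigF) (by positivity)
  have hfinal : (Fintype.card A : ℝ) * ((admSet F d T).ncard : ℝ)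
      ≤ ((admSet F d (insert g T)).ncard : ℝ)
        + ((Fintype.card A : ℝ) - γ) * ((admSet F d T).ncard : ℝ) := by
    have hc2 : (pairs.ncard : ℝ) ≤ (good.ncard : ℝ) + ((pairs \ good).ncard : ℝ) := by
      exact_mod_cast h2
    have hc4 : ((pairs \ good).ncard : ℝ) ≤ ∑ fj ∈ σidx, ((BadVia fj.1 fj.2).ncard : ℝ) := by
      exact_mod_cast h4
    have hc3 : (good.ncard : ℝ) ≤ ((admSet F d (insert g T)).ncard : ℝ) := by
      exact_mod_cast h3
    have hc1 : (pairs.ncard : ℝ)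
        = ((admSet F d T).ncard : ℝ) * (Fintype.card A : ℝ) := by
      rw [h1]; push_cast; ring
    nlinarith [hc2, hc4, hc3, hc1, h6]
  linarith
end Dev2
section Dev3
variable {A : Type*} [Fintype A] [Nonempty A] {F : Set (List A)} {d : A}

lemma adm_empty (hne : ∀ f ∈ F, f ≠ []) :
    admSet F d (∅ : Finset ℤ) = {fun _ => d} := by
  ext x
  constructor
  · intro hx
    have : x = fun _ => d := funext fun i => hx.1 i (Finset.notMem_empty i)
    simpa using this
  · intro hx
    have hx' : x = fun _ => d := hx
    constructor
    · intro i _; rw [hx']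
    · intro f hf g hwin _
      have hlen : 0 < f.length := List.length_pos_iff.2 (hne f hf)
      exact absurd (hwin 0 hlen) (Finset.notMem_empty _)

section WithKey
variable (hne : ∀ f ∈ F, f ≠ []) (γ : ℝ) (hγ : 0 < γ)
  (hkey : ∀ (T : Finset ℤ) (g : ℤ), g ∉ T →
    γ * ((admSet F d T).ncard : ℝ) ≤ ((admSet F d (insert g T)).ncard : ℝ))

include hγ hkey

include hne in
lemma adm_lower : ∀ T : Finset ℤ, γ ^ T.card ≤ ((admSet F d T).ncard : ℝ) := by
  intro T
  induction T using Finset.induction_on with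
  | empty => rw [adm_empty hne]; simp
  | @insert g T hgT IHT =>
    rw [Finset.card_insert_of_notMem hgT, pow_succ, mul_comm]
    calc γ * γ ^ T.card ≤ γ * ((admSet F d T).ncard : ℝ) :=
          mul_le_mul_of_nonneg_left IHT (le_of_lt hγ)
      _ ≤ _ := hkey T g hgT

lemma chain_all : ∀ (T W : Finset ℤ), W ⊆ T →
    γ ^ W.card * ((admSet F d (T \ W)).ncard : ℝ) ≤ ((admSet F d T).ncard : ℝ) := by
  intro T W
  induction W using Finset.induction_on with
  | empty => intro _; simp
  | @insert w W hwW IHW =>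
    intro hins
    have hwT : w ∈ T := hins (Finset.mem_insert_self w W)
    have hWT : W ⊆ T := fun y hy => hins (Finset.mem_insert_of_mem hy)
    have hw' : w ∈ T \ W := Finset.mem_sdiff.2 ⟨hwT, hwW⟩
    have h1 : T \ insert w W = (T \ W).erase w := by
      ext y
      simp only [Finset.mem_sdiff, Finset.mem_insert, Finset.mem_erase]
      tauto
    have h2 : insert w ((T \ W).erase w) = T \ W := Finset.insert_erase hw'
    have hkey' : γ * ((admSet F d ((T \ W).erase w)).ncard : ℝ)
        ≤ ((admSet F d (T \ W)).ncard : ℝ) := by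
      have := hkey ((T \ W).erase w) w (Finset.notMem_erase w _)
      rwa [h2] at this
    calc γ ^ (insert w W).card * ((admSet F d (T \ insert w W)).ncard : ℝ)
        = γ ^ W.card * (γ * ((admSet F d ((T \ W).erase w)).ncard : ℝ)) := by
          rw [Finset.card_insert_of_notMem hwW, h1]; ring
      _ ≤ γ ^ W.card * ((admSet F d (T \ W)).ncard : ℝ) :=
          mul_le_mul_of_nonneg_left hkey' (by positivity)
      _ ≤ ((admSet F d T).ncard : ℝ) := IHW hWT

end WithKey

/-- the window `[-k, n+k]`. -/
noncomputable def Tkn (n k : ℕ) : Finset ℤ := Finset.Icc (-(k : ℤ)) ((n : ℤ) + k)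

/-- the central window `[0, n-1]`. -/
noncomputable def S0n (n : ℕ) : Finset ℤ := Finset.Icc 0 ((n : ℤ) - 1)

lemma S0_subset_Tk (n k : ℕ) : S0n n ⊆ Tkn n k := by
  intro y hy
  rw [S0n, Finset.mem_Icc] at hy
  rw [Tkn, Finset.mem_Icc]
  omega

lemma S0_card (n : ℕ) : (S0n n).card = n := by
  rw [S0n, Int.card_Icc]
  omega

variable (F d) in
/-- words of length `n` readable in admissible patterns on the window `[-k,n+k]`. -/
def WimSet (n k : ℕ) : Set (List A) :=
  (fun x : ℤ → A => List.ofFn (fun i : Fin n => x ((i : ℕ) : ℤ))) '' admSet F d (Tkn n k)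

lemma Wim_finite (n k : ℕ) : (WimSet F d n k).Finite :=
  (admSet_finite _).image _

lemma Wim_anti (n : ℕ) : ∀ k k' : ℕ, k ≤ k' → WimSet F d n k' ⊆ WimSet F d n k := by
  intro k k' hkk
  rintro w ⟨x, hx, rfl⟩
  have hsub : Tkn n k ⊆ Tkn n k' := by
    intro y hy
    rw [Tkn, Finset.mem_Icc] at hy ⊢
    omega
  refine ⟨maskF d (Tkn n k) x, maskF_mem hx hsub, ?_⟩
  apply congrArg List.ofFn
  funext i
  have hmem : ((i : ℕ) : ℤ) ∈ Tkn n k := by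
    rw [Tkn, Finset.mem_Icc]
    have := i.2
    omega
  simp [maskF, hmem]

section WithKey2
variable (hne : ∀ f ∈ F, f ≠ []) (γ : ℝ) (hγ : 0 < γ)
  (hkey : ∀ (T : Finset ℤ) (g : ℤ), g ∉ T →
    γ * ((admSet F d T).ncard : ℝ) ≤ ((admSet F d (insert g T)).ncard : ℝ))

include hne hγ hkey in
lemma Wim_lower (n k : ℕ) : γ ^ n ≤ ((WimSet F d n k).ncard : ℝ) := by
  classical
  have hST : S0n n ⊆ Tkn n k := S0_subset_Tk n k
  -- counting: N T ≤ |Wim| * N (T \ S)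
  have hcount : (admSet F d (Tkn n k)).ncard
      ≤ (WimSet F d n k).ncard * (admSet F d (Tkn n k \ S0n n)).ncard := by
    have := Set.ncard_le_ncard_of_injOn
      (fun x : ℤ → A => ((List.ofFn (fun i : Fin n => x ((i : ℕ) : ℤ)),
          maskF d (Tkn n k \ S0n n) x) : List A × (ℤ → A)))
      (s := admSet F d (Tkn n k))
      (t := (WimSet F d n k) ×ˢ (admSet F d (Tkn n k \ S0n n))) ?_ ?_ ?_
    · rwa [_root_.ncard_prod] at this
    · intro x hx
      exact ⟨⟨x, hx, rfl⟩, maskF_mem hx Finset.sdiff_subset⟩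
    · intro x hx y hy hxy
      have h1 : List.ofFn (fun i : Fin n => x ((i : ℕ) : ℤ))
          = List.ofFn (fun i : Fin n => y ((i : ℕ) : ℤ)) := congrArg Prod.fst hxy
      have h2 : maskF d (Tkn n k \ S0n n) x = maskF d (Tkn n k \ S0n n) y :=
        congrArg Prod.snd hxy
      have h1' : ∀ i : Fin n, x ((i : ℕ) : ℤ) = y ((i : ℕ) : ℤ) := by
        intro i
        have := List.ofFn_injective h1
        exact congrFun this i
      funext i
      by_cases hiS : i ∈ S0n n
      · rw [S0n, Finset.mem_Icc] at hiS
        have hnat : i.toNat < n := by omega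
        have hcast : ((( ⟨i.toNat, hnat⟩ : Fin n) : ℕ) : ℤ) = i := by
          simp only []
          omega
        have := h1' ⟨i.toNat, hnat⟩
        rwa [hcast] at this
      · by_cases hiT : i ∈ Tkn n k
        · have hmem : i ∈ Tkn n k \ S0n n := Finset.mem_sdiff.2 ⟨hiT, hiS⟩
          have := congrFun h2 i
          simpa [maskF, hmem] using this
        · rw [hx.1 i hiT, hy.1 i hiT]
    · exact (Wim_finite n k).prod (admSet_finite _)
  have hchain := chain_all γ hγ hkey (Tkn n k) (S0n n) hST
  rw [S0_card] at hchain
  have hpos : (0 : ℝ) < ((admSet F d (Tkn n k \ S0n n)).ncard : ℝ) := by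
    have := adm_lower hne γ hγ hkey (Tkn n k \ S0n n)
    have h0 : (0:ℝ) < γ ^ (Tkn n k \ S0n n).card := by positivity
    linarith
  have hcount' : ((admSet F d (Tkn n k)).ncard : ℝ)
      ≤ ((WimSet F d n k).ncard : ℝ) * ((admSet F d (Tkn n k \ S0n n)).ncard : ℝ) := by
    exact_mod_cast hcount
  have := le_trans hchain hcount'
  calc γ ^ n = γ ^ n * ((admSet F d (Tkn n k \ S0n n)).ncard : ℝ)
        / ((admSet F d (Tkn n k \ S0n n)).ncard : ℝ) := by
        field_simp
    _ ≤ ((WimSet F d n k).ncard : ℝ) := by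
        rw [div_le_iff₀ hpos]
        linarith

include hne hγ hkey in
lemma lang_lower (n : ℕ) : γ ^ n ≤ (((lang (zShift F) n)).ncard : ℝ) := by
  classical
  -- stabilization
  have hex : ∃ K : ℕ, ∀ k : ℕ, WimSet F d n K ⊆ WimSet F d n k := by
    have hnonempty : (Set.range fun k => (WimSet F d n k).ncard).Nonempty :=
      ⟨(WimSet F d n 0).ncard, ⟨0, rfl⟩⟩
    have hmem : sInf (Set.range fun k => (WimSet F d n k).ncard)
        ∈ (Set.range fun k => (WimSet F d n k).ncard) := Nat.sInf_mem hnonempty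
    obtain ⟨K, hK⟩ := hmem
    refine ⟨K, fun k => ?_⟩
    rcases le_total k K with h | h
    · exact Wim_anti (F := F) (d := d) n k K h
    · have hsub := Wim_anti (F := F) (d := d) n K k h
      have hle : (WimSet F d n K).ncard ≤ (WimSet F d n k).ncard := by
        have h2 : (WimSet F d n K).ncard
            = sInf (Set.range fun k => (WimSet F d n k).ncard) := hK
        rw [h2]
        exact Nat.sInf_le ⟨k, rfl⟩
      rw [Set.eq_of_subset_of_ncard_le hsub hle (Wim_finite n K)]
  obtain ⟨K, hK⟩ := hex
  have hsub : WimSet F d n K ⊆ lang (zShift F) n := by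
    intro w hw
    have hx : ∀ k : ℕ, ∃ x, x ∈ admSet F d (Tkn n k) ∧
        List.ofFn (fun i : Fin n => x ((i : ℕ) : ℤ)) = w := by
      intro k
      obtain ⟨x, hx1, hx2⟩ := hK k hw
      exact ⟨x, hx1, hx2⟩
    choose xk hxk1 hxk2 using hx
    set U : Ultrafilter ℕ := Filter.hyperfilter ℕ with hU
    have hval : ∀ i : ℤ, ∃ v : A, {k | xk k i = v} ∈ U := by
      intro i
      have huniv : (⋃ v ∈ (Set.univ : Set A), {k | xk k i = v}) ∈ U := by
        have he : (⋃ v ∈ (Set.univ : Set A), {k | xk k i = v}) = Set.univ := by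
          ext k; simp
        rw [he]
        exact Filter.univ_mem
      rcases (Ultrafilter.finite_biUnion_mem_iff Set.finite_univ).1 huniv with ⟨v, _, hv⟩
      exact ⟨v, hv⟩
    choose xf hxf using hval
    have hagree : ∀ s : Finset ℤ, {k | ∀ i ∈ s, xk k i = xf i} ∈ U := by
      intro s
      induction s using Finset.induction_on with
      | empty =>
        have : {k : ℕ | ∀ i ∈ (∅ : Finset ℤ), xk k i = xf i} = Set.univ := by
          ext k; simp
        rw [this]
        exact Filter.univ_mem
      | @insert a s ha IHs =>
        have : ({k | xk k a = xf a} ∩ {k | ∀ i ∈ s, xk k i = xf i}) ∈ U :=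
          Filter.inter_mem (hxf a) IHs
        apply Filter.mem_of_superset this
        rintro k ⟨hk1, hk2⟩ i hi
        rcases Finset.mem_insert.1 hi with rfl | hi
        · exact hk1
        · exact hk2 i hi
    have hXF : xf ∈ zShift F := by
      intro f hfF hocc
      obtain ⟨g0, hm⟩ := hocc
      set s : Finset ℤ := Finset.image (fun i : ℕ => g0 + (i : ℤ)) (Finset.range f.length)
        with hs
      obtain ⟨k₀, hk₀⟩ : ∃ k₀ : ℕ, ∀ i ∈ s, -(k₀ : ℤ) ≤ i ∧ i ≤ (k₀ : ℤ) := by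
        refine ⟨s.sup Int.natAbs, fun i hi => ?_⟩
        have h1 : i.natAbs ≤ s.sup Int.natAbs := Finset.le_sup hi
        omega
      have hbig : {k : ℕ | k₀ ≤ k} ∈ U := by
        apply Filter.hyperfilter_le_cofinite
        have : {k : ℕ | k₀ ≤ k}ᶜ ⊆ {k : ℕ | k < k₀} := by
          intro k hk
          simpa using hk
        exact Set.Finite.subset (Set.finite_lt_nat k₀) this
      obtain ⟨k, hk1, hk2⟩ := Filter.nonempty_of_mem
        (Filter.inter_mem (hagree s) hbig)
      refine (hxk1 k).2 f hfF g0 ?_ ?_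
      · intro i hi
        have hmem : g0 + (i : ℤ) ∈ s := by
          rw [hs]
          exact Finset.mem_image.2 ⟨i, Finset.mem_range.2 hi, rfl⟩
        have := hk₀ _ hmem
        have hkk : (k₀ : ℤ) ≤ (k : ℤ) := by exact_mod_cast hk2
        rw [Tkn, Finset.mem_Icc]
        omega
      · intro i hi
        have hmem : g0 + (i : ℤ) ∈ s := by
          rw [hs]
          exact Finset.mem_image.2 ⟨i, Finset.mem_range.2 hi, rfl⟩
        rw [hk1 _ hmem]
        exact hm i hi
    have hlen : w.length = n := by
      rw [← hxk2 0]
      simp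
    refine ⟨hlen, xf, hXF, 0, ?_⟩
    intro i hi
    have hin : i < n := hlen ▸ hi
    obtain ⟨k, hk⟩ := Filter.nonempty_of_mem (hxf ((i : ℤ)))
    have h1 : w[i]? = some (xk k ((i : ℕ) : ℤ)) := by
      rw [← hxk2 k]
      simp [List.getElem?_ofFn, hin]
    have h2 : w[i]? = some (w.get ⟨i, hi⟩) := by
      rw [List.getElem?_eq_getElem hi, List.get_eq_getElem]
    have hwk : w.get ⟨i, hi⟩ = xk k ((i : ℕ) : ℤ) := by
      have := h2.symm.trans h1
      exact Option.some.inj this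
    rw [zero_add, hwk]
    exact hk.symm
  have hfin : (lang (zShift F) n).Finite :=
    (finite_len_le n).subset (fun w hw => le_of_eq hw.1)
  calc γ ^ n ≤ ((WimSet F d n K).ncard : ℝ) := Wim_lower hne γ hγ hkey n K
    _ ≤ _ := by exact_mod_cast Set.ncard_le_ncard hsub hfin

end WithKey2
end Dev3
section Dev4
variable {A : Type*} [Fintype A] [Nonempty A]

lemma lang_take_drop (X : Set (ℤ → A)) (m n : ℕ) :
    (lang X (m + n)).ncard ≤ (lang X m).ncard * (lang X n).ncard := by
  classical
  have hfin : ∀ j : ℕ, (lang X j).Finite :=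
    fun j => (finite_len_le j).subset (fun w hw => le_of_eq hw.1)
  have := Set.ncard_le_ncard_of_injOn
    (fun w : List A => (w.take m, w.drop m))
    (s := lang X (m + n)) (t := (lang X m) ×ˢ (lang X n)) ?_ ?_ ?_
  · rwa [_root_.ncard_prod] at this
  · rintro w ⟨hwlen, x, hxX, g, hm⟩
    constructor
    · refine ⟨by rw [List.length_take, hwlen]; omega, x, hxX, g, ?_⟩
      intro i hi
      have him : i < m := by
        have := hi
        rw [List.length_take] at this
        omega
      have hiw : i < w.length := by omega
      have := hm i hiw
      rw [List.get_eq_getElem] at this ⊢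
      rw [List.getElem_take]
      exact this
    · refine ⟨by rw [List.length_drop, hwlen]; omega, x, hxX, g + (m : ℤ), ?_⟩
      intro i hi
      have hid : i < w.length - m := by
        have := hi
        rw [List.length_drop] at this
        omega
      have hiw : m + i < w.length := by omega
      have := hm (m + i) hiw
      rw [List.get_eq_getElem] at this ⊢
      rw [List.getElem_drop]
      rw [← this]
      congr 1
      push_cast
      ring
  · intro w1 h1 w2 h2 hw
    have ht : w1.take m = w2.take m := congrArg Prod.fst hw
    have hd : w1.drop m = w2.drop m := congrArg Prod.snd hw
    rw [← List.take_append_drop m w1, ← List.take_append_drop m w2, ht, hd]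
  · exact (hfin m).prod (hfin n)

lemma pow_bound : ∀ L : ℕ, ((L : ℝ) + 1) ≤ (14 / 5) ^ L := by
  intro L
  induction L with
  | zero => norm_num
  | succ L IH =>
    have h : ((14:ℝ) / 5) ^ (L + 1) = (14 / 5) * (14 / 5) ^ L := by ring
    rw [h]
    push_cast
    nlinarith [IH]

theorem entropy_gt_of_small_sum' {A : Type*} [Fintype A] [Nonempty A]
    (F : Set (List A)) (hne : ∀ f ∈ F, f ≠ [])
    (hsum : Summable fun n : ℕ =>
      (({f ∈ F | f.length = n + 1}).ncard : ℝ) * (3 / (Fintype.card A : ℝ)) ^ (n + 1))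
    (hcond : ∑' n : ℕ,
      (({f ∈ F | f.length = n + 1}).ncard : ℝ) * (3 / (Fintype.card A : ℝ)) ^ (n + 1)
        < 1 / 5) :
    ∃ h₀ : ℝ, Filter.Tendsto
        (fun n : ℕ => Real.log ((lang (zShift F) n).ncard) / n)
        Filter.atTop (nhds h₀) ∧
      Real.log (14 * (Fintype.card A : ℝ) / 15) < h₀ := by
  classical
  have hA1 : 1 ≤ Fintype.card A := Fintype.card_pos
  have ha : (1 : ℝ) ≤ (Fintype.card A : ℝ) := by exact_mod_cast hA1
  have ha0 : (0 : ℝ) < (Fintype.card A : ℝ) := by linarith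
  set a : ℝ := (Fintype.card A : ℝ) with hadef
  set Sv : ℝ := ∑' n : ℕ,
    (({f ∈ F | f.length = n + 1}).ncard : ℝ) * (3 / a) ^ (n + 1) with hSdef
  have hSnonneg : 0 ≤ Sv := by
    apply tsum_nonneg
    intro n
    have : (0:ℝ) ≤ (3 / a) ^ (n+1) := by positivity
    positivity
  have hS5 : Sv < 1 / 5 := hcond
  set γ : ℝ := 14 * a / 15 + a / 3 * (1 / 5 - Sv) / 2 with hγdef
  have hγβ : 14 * a / 15 < γ := by
    rw [hγdef]
    nlinarith [hS5, ha]
  have hγpos : 0 < γ := by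
    have h14 : (0:ℝ) < 14 * a / 15 := by linarith
    exact lt_trans h14 hγβ
  have d : A := Classical.arbitrary A
  clear_value γ Sv a
  -- budget
  have hbudget : ∀ M : Finset (List A), ↑M ⊆ F →
      ∑ f ∈ M, (f.length : ℝ) * (1 / γ) ^ (f.length - 1) ≤ a - γ := by
    intro M hMF
    have hlen1 : ∀ f ∈ M, 1 ≤ f.length :=
      fun f hf => List.length_pos_iff.2 (hne f (hMF hf))
    have hstep1 : ∀ f ∈ M,
        (f.length : ℝ) * (1 / γ) ^ (f.length - 1) ≤ (3 / a) ^ (f.length - 1) := by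
      intro f hf
      have hf1 := hlen1 f hf
      have hL : ((f.length : ℝ)) ≤ (14 / 5) ^ (f.length - 1) := by
        have := pow_bound (f.length - 1)
        have hc : ((f.length - 1 : ℕ) : ℝ) + 1 = (f.length : ℝ) := by
          have : (1:ℕ) ≤ f.length := hf1
          push_cast [Nat.cast_sub this]
          ring
        rwa [hc] at this
      calc (f.length : ℝ) * (1 / γ) ^ (f.length - 1)
          ≤ (14 / 5) ^ (f.length - 1) * (1 / γ) ^ (f.length - 1) := by
            apply mul_le_mul_of_nonneg_right hL (by positivity)
        _ = (14 / 5 * (1 / γ)) ^ (f.length - 1) := by rw [mul_pow]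
        _ ≤ (3 / a) ^ (f.length - 1) := by
            apply pow_le_pow_left₀ (by positivity)
            rw [div_mul_div_comm, mul_one, div_le_div_iff₀ (by linarith) ha0]
            nlinarith [hγβ, ha, hγpos]
    have hstep2 : ∑ f ∈ M, ((3 : ℝ) / a) ^ (f.length - 1) ≤ a / 3 * Sv := by
      have hrw : ∀ f ∈ M, ((3 : ℝ) / a) ^ (f.length - 1) = a / 3 * (3 / a) ^ f.length := by
        intro f hf
        have hf1 := hlen1 f hf
        have h1 : ((3:ℝ) / a) ^ f.length = (3 / a) ^ (f.length - 1) * (3 / a) := by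
          rw [← pow_succ]
          congr 1
          omega
        rw [h1]
        field_simp
      rw [Finset.sum_congr rfl hrw, ← Finset.mul_sum]
      have hsum5 : ∑ f ∈ M, ((3 : ℝ) / a) ^ f.length ≤ Sv := by
        have hmaps : ∀ f ∈ M, f.length - 1 ∈ Finset.range (M.sup List.length + 1) := by
          intro f hf
          have := Finset.le_sup (f := List.length) hf
          exact Finset.mem_range.2 (by omega)
        rw [← Finset.sum_fiberwise_of_maps_to hmaps (fun f => ((3:ℝ)/a) ^ f.length)]
        have hinner : ∀ L ∈ Finset.range (M.sup List.length + 1),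
            (∑ f ∈ M.filter (fun f => f.length - 1 = L), ((3:ℝ)/a) ^ f.length)
            ≤ (({f ∈ F | f.length = L + 1}).ncard : ℝ) * (3 / a) ^ (L + 1) := by
          intro L _
          have hfib : ∀ f ∈ M.filter (fun f => f.length - 1 = L),
              ((3:ℝ)/a) ^ f.length = (3/a) ^ (L+1) := by
            intro f hf
            obtain ⟨hfM, hfl⟩ := Finset.mem_filter.1 hf
            have := hlen1 f hfM
            congr 1
            omega
          rw [Finset.sum_congr rfl hfib, Finset.sum_const, nsmul_eq_mul]
          apply mul_le_mul_of_nonneg_right ?_ (by positivity)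
          have hsubset : ↑(M.filter (fun f => f.length - 1 = L)) ⊆
              {f ∈ F | f.length = L + 1} := by
            intro f hf
            rw [Finset.mem_coe, Finset.mem_filter] at hf
            obtain ⟨hfM, hfl⟩ := hf
            have := hlen1 f hfM
            exact ⟨hMF hfM, by omega⟩
          have hfin : ({f ∈ F | f.length = L + 1}).Finite :=
            (finite_len_le (L+1)).subset (fun f hf => le_of_eq hf.2)
          have := Set.ncard_le_ncard hsubset hfin
          rw [Set.ncard_coe_finset] at this
          exact_mod_cast this
        apply le_trans (Finset.sum_le_sum hinner)
        rw [hSdef]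
        apply hsum.sum_le_tsum _ _
        intro L _
        have h3a : (0:ℝ) ≤ (3 / a) ^ (L+1) := by positivity
        positivity
      apply mul_le_mul_of_nonneg_left hsum5 (by linarith)
    have hfinal : a / 3 * Sv ≤ a - γ := by
      rw [hγdef]
      nlinarith [hS5, hSnonneg, ha]
    calc ∑ f ∈ M, (f.length : ℝ) * (1 / γ) ^ (f.length - 1)
        ≤ ∑ f ∈ M, ((3 : ℝ) / a) ^ (f.length - 1) := Finset.sum_le_sum hstep1
      _ ≤ a / 3 * Sv := hstep2
      _ ≤ a - γ := hfinal
  rw [hadef] at hbudget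
  have hkey : ∀ (T : Finset ℤ), ∀ g ∉ T,
      γ * ((admSet F d T).ncard : ℝ) ≤ ((admSet F d (insert g T)).ncard : ℝ) :=
    fun T g hg => key γ hγpos hbudget T.card T le_rfl g hg
  have hlow : ∀ n : ℕ, γ ^ n ≤ ((lang (zShift F) n).ncard : ℝ) :=
    fun n => lang_lower (d := d) hne γ hγpos hkey n
  have hcpos : ∀ n : ℕ, (0:ℝ) < ((lang (zShift F) n).ncard : ℝ) := by
    intro n
    have := hlow n
    have h0 : (0:ℝ) < γ ^ n := by positivity
    linarith
  have hcne : ∀ n : ℕ, ((lang (zShift F) n).ncard : ℝ) ≠ 0 :=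
    fun n => ne_of_gt (hcpos n)
  have hsubadd : Subadditive (fun n : ℕ => Real.log ((lang (zShift F) n).ncard)) := by
    intro m n
    have hmn := lang_take_drop (zShift F) m n
    have hmn' : ((lang (zShift F) (m+n)).ncard : ℝ)
        ≤ ((lang (zShift F) m).ncard : ℝ) * ((lang (zShift F) n).ncard : ℝ) := by
      exact_mod_cast hmn
    calc Real.log ((lang (zShift F) (m+n)).ncard)
        ≤ Real.log (((lang (zShift F) m).ncard : ℝ) * ((lang (zShift F) n).ncard : ℝ)) := by
          apply Real.log_le_log (hcpos (m+n)) hmn'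
      _ = _ := Real.log_mul (hcne m) (hcne n)
  have hlogdiv : ∀ n : ℕ, 0 < n →
      Real.log γ ≤ Real.log ((lang (zShift F) n).ncard) / n := by
    intro n hn
    rw [le_div_iff₀ (by exact_mod_cast hn)]
    calc Real.log γ * n = Real.log (γ ^ n) := by rw [Real.log_pow]; ring
      _ ≤ Real.log ((lang (zShift F) n).ncard) :=
          Real.log_le_log (by positivity) (hlow n)
  have hbdd : BddBelow (Set.range fun n : ℕ =>
      Real.log ((lang (zShift F) n).ncard) / n) := by
    refine ⟨min (Real.log γ) 0, ?_⟩
    rintro y ⟨n, rfl⟩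
    rcases Nat.eq_zero_or_pos n with rfl | hn
    · simp only [Nat.cast_zero, div_zero]
      exact min_le_right _ _
    · exact le_trans (min_le_left _ _) (hlogdiv n hn)
  refine ⟨hsubadd.lim, hsubadd.tendsto_lim hbdd, ?_⟩
  have h1 : Real.log (14 * a / 15) < Real.log γ := by
    apply Real.log_lt_log (by linarith) hγβ
  have h2 : Real.log γ ≤ hsubadd.lim := by
    rw [Subadditive.lim]
    apply le_csInf
    · exact (Set.nonempty_Ici).image _
    · rintro y ⟨n, hn1, rfl⟩
      exact hlogdiv n hn1
  calc Real.log (14 * a / 15) < Real.log γ := h1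
    _ ≤ _ := h2
end Dev4

/-- Improvement of Pavlov's Theorem 7.1: if `∑_{n≥1} |F_n|·(3/|A|)^n < 1/5`, where `F_n`
is the set of forbidden words of length `n`, then `h(X_F) > log(14|A|/15)`. -/
theorem entropy_gt_of_small_sum {A : Type*} [Fintype A] [Nonempty A]
    (F : Set (List A)) (hne : ∀ f ∈ F, f ≠ [])
    (hsum : Summable fun n : ℕ =>
      (({f ∈ F | f.length = n + 1}).ncard : ℝ) * (3 / (Fintype.card A : ℝ)) ^ (n + 1))
    (hcond : ∑' n : ℕ,
      (({f ∈ F | f.length = n + 1}).ncard : ℝ) * (3 / (Fintype.card A : ℝ)) ^ (n + 1)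
        < 1 / 5) :
    ∃ h₀ : ℝ, Filter.Tendsto
        (fun n : ℕ => Real.log ((lang (zShift F) n).ncard) / n)
        Filter.atTop (nhds h₀) ∧
      Real.log (14 * (Fintype.card A : ℝ) / 15) < h₀ := by
  exact entropy_gt_of_small_sum' F hne hsum hcond
end
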